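/- arXiv:1204.5874 — 3 statements merged into one kernel-verified Lean document; each statement's English description precedes it below -/
import Mathlib

section
/- Every metric tree T satisfies ℓ-asdim T ≤ 1, i.e., there exists C > 0 such that for every sufficiently large R > 0 the tree T admits a covering by subsets of diameter at most C·R that splits into 2 families, each of which is R-disjoint. -/
/-- `X` admits a covering split into `m` families of subsets, each family
`R`-disjoint, with all members of diameter at most `D`. -/
def ColoredCover (X : Type*) [MetricSpace X] (m : ℕ) (R D : ℝ) : Prop :=
  ∃ B : Fin m → Set (Set X),
    (∀ x : X, ∃ i : Fin m, ∃ U ∈ B i, x ∈ U) ∧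
    (∀ i : Fin m, ∀ U ∈ B i, ∀ x ∈ U, ∀ y ∈ U, dist x y ≤ D) ∧
    (∀ i : Fin m, ∀ U ∈ B i, ∀ V ∈ B i, U ≠ V → ∀ x ∈ U, ∀ y ∈ V, R ≤ dist x y)

/-- `asdim X ≤ n`: for every sufficiently large `R > 0` there are `D > 0` and a
covering of `X` by `D`-bounded subsets split into `n+1` `R`-disjoint families. -/
def AsdimLE (X : Type*) [MetricSpace X] (n : ℕ) : Prop :=
  ∃ R₀ > (0 : ℝ), ∀ R ≥ R₀, ∃ D > (0 : ℝ), ColoredCover X (n + 1) R D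

/-- `ℓ-asdim X ≤ n`: there is `C > 0` such that for every sufficiently large
`R > 0` there is a covering of `X` by `C·R`-bounded subsets split into `n+1`
`R`-disjoint families. -/
def LAsdimLE (X : Type*) [MetricSpace X] (n : ℕ) : Prop :=
  ∃ C > (0 : ℝ), ∃ R₀ > (0 : ℝ), ∀ R ≥ R₀, ColoredCover X (n + 1) R (C * R)

/-- The asymptotic dimension of `X`, as an extended natural number. -/
noncomputable def asdim (X : Type*) [MetricSpace X] : ℕ∞ :=
  sInf {m : ℕ∞ | ∃ n : ℕ, m = (n : ℕ∞) ∧ AsdimLE X n}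

/-- The linearly-controlled asymptotic dimension of `X`, as an extended
natural number. -/
noncomputable def lasdim (X : Type*) [MetricSpace X] : ℕ∞ :=
  sInf {m : ℕ∞ | ∃ n : ℕ, m = (n : ℕ∞) ∧ LAsdimLE X n}

/-- `s` is (the image of) a geodesic segment from `x` to `y`. -/
def IsGeodesicSeg (X : Type*) [MetricSpace X] (s : Set X) (x y : X) : Prop :=
  ∃ γ : ℝ → X, γ 0 = x ∧ γ (dist x y) = y ∧
    (∀ a ∈ Set.Icc (0 : ℝ) (dist x y), ∀ b ∈ Set.Icc (0 : ℝ) (dist x y),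
      dist (γ a) (γ b) = |a - b|) ∧
    s = γ '' Set.Icc (0 : ℝ) (dist x y)

/-- A geodesic metric space: any two points are joined by a geodesic segment. -/
def GeodesicSpace (X : Type*) [MetricSpace X] : Prop :=
  ∀ x y : X, ∃ s : Set X, IsGeodesicSeg X s x y

/-- A tripod: a union of three geodesic segments `xt ∪ yt ∪ zt` having only
the point `t` in common (possibly degenerate). -/
def IsTripod (X : Type*) [MetricSpace X] (s : Set X) : Prop :=
  ∃ (x y z t : X) (sx sy sz : Set X),
    IsGeodesicSeg X sx x t ∧ IsGeodesicSeg X sy y t ∧ IsGeodesicSeg X sz z t ∧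
    sx ∩ sy = {t} ∧ sy ∩ sz = {t} ∧ sx ∩ sz = {t} ∧
    s = sx ∪ sy ∪ sz

/-- A metric tree: a geodesic metric space in which every geodesic triangle
is a tripod. -/
def IsMetricTree (X : Type*) [MetricSpace X] : Prop :=
  GeodesicSpace X ∧
  ∀ (x y z : X) (sxy syz szx : Set X),
    IsGeodesicSeg X sxy x y → IsGeodesicSeg X syz y z → IsGeodesicSeg X szx z x →
    IsTripod X (sxy ∪ syz ∪ szx)

section AuxMetricTree

variable {X : Type*} [MetricSpace X] {s : Set X} {x y p q : X}


lemma geo_mem_left (g : IsGeodesicSeg X s x y) : x ∈ s := by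
  obtain ⟨γ, h0, hD, hiso, him⟩ := g
  rw [him]
  exact ⟨0, ⟨le_refl 0, dist_nonneg⟩, h0⟩

lemma geo_mem_right (g : IsGeodesicSeg X s x y) : y ∈ s := by
  obtain ⟨γ, h0, hD, hiso, him⟩ := g
  rw [him]
  exact ⟨dist x y, ⟨dist_nonneg, le_refl _⟩, hD⟩

lemma geo_dists (g : IsGeodesicSeg X s x y) (hp : p ∈ s) :
    dist x p + dist p y = dist x y ∧
    (∀ q ∈ s, dist p q = |dist x p - dist x q| ∧ dist p q = |dist p y - dist q y|) := by
  obtain ⟨γ, h0, hD, hiso, him⟩ := g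
  rw [him] at hp
  obtain ⟨a, ha, rfl⟩ := hp
  have h0m : (0:ℝ) ∈ Set.Icc (0:ℝ) (dist x y) := ⟨le_refl _, dist_nonneg⟩
  have hDm : dist x y ∈ Set.Icc (0:ℝ) (dist x y) := ⟨dist_nonneg, le_refl _⟩
  have hxa : dist x (γ a) = a := by
    have h := hiso 0 h0m a ha; rw [h0] at h
    rw [h, abs_sub_comm]; simpa using abs_of_nonneg ha.1
  have hay : dist (γ a) y = dist x y - a := by
    have h := hiso a ha _ hDm; rw [hD] at h
    rw [h, abs_sub_comm]; exact abs_of_nonneg (by linarith [ha.2])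
  refine ⟨by linarith, ?_⟩
  intro q hq
  rw [him] at hq
  obtain ⟨b, hb, rfl⟩ := hq
  have hxb : dist x (γ b) = b := by
    have h := hiso 0 h0m b hb; rw [h0] at h
    rw [h, abs_sub_comm]; simpa using abs_of_nonneg hb.1
  have hby : dist (γ b) y = dist x y - b := by
    have h := hiso b hb _ hDm; rw [hD] at h
    rw [h, abs_sub_comm]; exact abs_of_nonneg (by linarith [hb.2])
  constructor
  · rw [hiso a ha b hb, hxa, hxb]
  · rw [hiso a ha b hb, hay, hby]
    rw [show dist x y - a - (dist x y - b) = -(a-b) by ring, abs_neg]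

lemma geo_add (g : IsGeodesicSeg X s x y) (hp : p ∈ s) :
    dist x p + dist p y = dist x y := (geo_dists g hp).1

lemma geo_dist_left (g : IsGeodesicSeg X s x y) (hp : p ∈ s) (hq : q ∈ s) :
    dist p q = |dist x p - dist x q| := ((geo_dists g hp).2 q hq).1

lemma geo_dist_right (g : IsGeodesicSeg X s x y) (hp : p ∈ s) (hq : q ∈ s) :
    dist p q = |dist p y - dist q y| := ((geo_dists g hp).2 q hq).2

lemma geo_singleton (x : X) : IsGeodesicSeg X {x} x x := by
  refine ⟨fun _ => x, rfl, rfl, fun a ha b hb => ?_, ?_⟩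
  · simp only [dist_self, Set.Icc_self, Set.mem_singleton_iff] at ha hb ⊢
    subst ha; subst hb; simp
  · simp [dist_self, Set.Icc_self]

lemma geo_rev (g : IsGeodesicSeg X s x y) : IsGeodesicSeg X s y x := by
  obtain ⟨γ, h0, hD, hiso, him⟩ := g
  have hc : dist y x = dist x y := dist_comm y x
  refine ⟨fun u => γ (dist x y - u), by simpa using hD, by rw [hc]; simpa using h0, ?_, ?_⟩
  · intro a ha b hb
    rw [hc] at ha hb
    rw [hiso _ ⟨by linarith [ha.2], by linarith [ha.1]⟩ _ ⟨by linarith [hb.2], by linarith [hb.1]⟩]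
    rw [show dist x y - a - (dist x y - b) = -(a-b) by ring, abs_neg]
  · rw [him, hc]
    rw [show (fun u => γ (dist x y - u)) = γ ∘ (fun u => dist x y - u) from rfl,
      Set.image_comp, Set.image_const_sub_Icc]
    norm_num

lemma geo_closed (g : IsGeodesicSeg X s x y) : IsClosed s := by
  obtain ⟨γ, h0, hD, hiso, him⟩ := g
  have hlip : LipschitzOnWith 1 γ (Set.Icc 0 (dist x y)) := by
    rw [lipschitzOnWith_iff_dist_le_mul]
    intro a ha b hb
    rw [hiso a ha b hb, Real.dist_eq]
    simp
  rw [him]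
  exact (isCompact_Icc.image_of_continuousOn hlip.continuousOn).isClosed

lemma geo_preconn (g : IsGeodesicSeg X s x y) : IsPreconnected s := by
  obtain ⟨γ, h0, hD, hiso, him⟩ := g
  have hlip : LipschitzOnWith 1 γ (Set.Icc 0 (dist x y)) := by
    rw [lipschitzOnWith_iff_dist_le_mul]
    intro a ha b hb
    rw [hiso a ha b hb, Real.dist_eq]
    simp
  rw [him]
  exact isPreconnected_Icc.image γ hlip.continuousOn

lemma geo_concat {z : X} {s1 s2 : Set X} (g1 : IsGeodesicSeg X s1 x y)
    (g2 : IsGeodesicSeg X s2 y z) (hadd : dist x z = dist x y + dist y z) :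
    IsGeodesicSeg X (s1 ∪ s2) x z := by
  obtain ⟨γ1, h10, h1D, h1iso, h1im⟩ := g1
  obtain ⟨γ2, h20, h2D, h2iso, h2im⟩ := g2
  set d1 := dist x y with hd1
  set d2 := dist y z with hd2
  have hd1n : 0 ≤ d1 := dist_nonneg
  have hd2n : 0 ≤ d2 := dist_nonneg
  -- distance from x to points of s2
  have hx2 : ∀ b ∈ Set.Icc (0:ℝ) d2, dist x (γ2 b) = d1 + b := by
    intro b hb
    have hyb : dist y (γ2 b) = b := by
      have h := h2iso 0 ⟨le_refl _, hd2n⟩ b hb; rw [h20] at h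
      rw [h, abs_sub_comm]; simpa using abs_of_nonneg hb.1
    have hbz : dist (γ2 b) z = d2 - b := by
      have h := h2iso b hb d2 ⟨hd2n, le_refl _⟩; rw [h2D] at h
      rw [h, abs_sub_comm]; exact abs_of_nonneg (by linarith [hb.2])
    have hle : dist x (γ2 b) ≤ d1 + b := by
      calc dist x (γ2 b) ≤ dist x y + dist y (γ2 b) := dist_triangle _ _ _
        _ = d1 + b := by rw [hyb]
    have hge : d1 + b ≤ dist x (γ2 b) := by
      have := dist_triangle x (γ2 b) z
      rw [hbz] at this; rw [hadd] at this; linarith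
    linarith
  -- cross distance
  have hcross : ∀ a ∈ Set.Icc (0:ℝ) d1, ∀ b ∈ Set.Icc (0:ℝ) d2,
      dist (γ1 a) (γ2 b) = (d1 - a) + b := by
    intro a ha b hb
    have hxa : dist x (γ1 a) = a := by
      have h := h1iso 0 ⟨le_refl _, hd1n⟩ a ha; rw [h10] at h
      rw [h, abs_sub_comm]; simpa using abs_of_nonneg ha.1
    have hay : dist (γ1 a) y = d1 - a := by
      have h := h1iso a ha d1 ⟨hd1n, le_refl _⟩; rw [h1D] at h
      rw [h, abs_sub_comm]; exact abs_of_nonneg (by linarith [ha.2])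
    have hyb : dist y (γ2 b) = b := by
      have h := h2iso 0 ⟨le_refl _, hd2n⟩ b hb; rw [h20] at h
      rw [h, abs_sub_comm]; simpa using abs_of_nonneg hb.1
    have hle : dist (γ1 a) (γ2 b) ≤ (d1 - a) + b := by
      calc dist (γ1 a) (γ2 b) ≤ dist (γ1 a) y + dist y (γ2 b) := dist_triangle _ _ _
        _ = (d1 - a) + b := by rw [hay, hyb]
    have hge : (d1 - a) + b ≤ dist (γ1 a) (γ2 b) := by
      have h := dist_triangle x (γ1 a) (γ2 b)
      rw [hxa] at h
      have h2 := hx2 b hb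
      linarith
    linarith
  refine ⟨fun u => if u ≤ d1 then γ1 u else γ2 (u - d1), by simp [hd1n, h10], ?_, ?_, ?_⟩
  · by_cases h : d1 + d2 ≤ d1
    · have : d2 = 0 := le_antisymm (by linarith) hd2n
      have hyz : y = z := by rw [← h2D, this, h20]
      simp only [hadd, if_pos h]
      rw [show d1 + d2 = d1 by rw [this]; ring, h1D, hyz]
    · simp only [hadd, if_neg h]
      rw [show d1 + d2 - d1 = d2 by ring, h2D]
  · intro a ha b hb
    rw [hadd] at ha hb
    by_cases h1 : a ≤ d1 <;> by_cases h2 : b ≤ d1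
    · simp only [if_pos h1, if_pos h2]
      exact h1iso a ⟨ha.1, h1⟩ b ⟨hb.1, h2⟩
    · simp only [if_pos h1, if_neg h2]
      rw [hcross a ⟨ha.1, h1⟩ (b - d1) ⟨by linarith, by linarith [hb.2]⟩]
      rw [abs_sub_comm, abs_of_nonneg (by linarith)]
      ring
    · simp only [if_neg h1, if_pos h2]
      rw [dist_comm, hcross b ⟨hb.1, h2⟩ (a - d1) ⟨by linarith, by linarith [ha.2]⟩]
      rw [abs_of_nonneg (by linarith)]
      ring
    · simp only [if_neg h1, if_neg h2]
      rw [h2iso (a - d1) ⟨by linarith, by linarith [ha.2]⟩ (b - d1) ⟨by linarith, by linarith [hb.2]⟩]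
      congr 1; ring
  · rw [hadd]
    apply Set.eq_of_subset_of_subset
    swap
    · rintro p ⟨u, hu, rfl⟩
      by_cases h : u ≤ d1
      · left; rw [h1im]; exact ⟨u, ⟨hu.1, h⟩, by simp [if_pos h]⟩
      · right; rw [h2im]
        exact ⟨u - d1, ⟨by linarith, by linarith [hu.2]⟩, by simp [if_neg h]⟩
    · rintro p (hp | hp)
      · rw [h1im] at hp; obtain ⟨u, hu, rfl⟩ := hp
        exact ⟨u, ⟨hu.1, by linarith [hu.2]⟩, by simp [if_pos hu.2]⟩
      · rw [h2im] at hp; obtain ⟨u, hu, rfl⟩ := hp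
        by_cases h : u = 0
        · subst h
          refine ⟨d1, ⟨hd1n, by linarith⟩, ?_⟩
          simp only [if_pos (le_refl d1)]
          rw [h1D, ← h20]
        · refine ⟨d1 + u, ⟨by linarith [hu.1], by linarith [hu.2]⟩, ?_⟩
          have : ¬ d1 + u ≤ d1 := by
            have : 0 < u := lt_of_le_of_ne hu.1 (Ne.symm h)
            linarith
          simp only [if_neg this]
          congr 1; ring

lemma preconn_split {S A B : Set X} (hS : IsPreconnected S) (hA : IsClosed A)
    (hB : IsClosed B) (hsub : S ⊆ A ∪ B) (hdisj : S ∩ (A ∩ B) = ∅) :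
    S ⊆ A ∨ S ⊆ B := by
  by_contra h
  push_neg at h
  obtain ⟨a, haS, haA⟩ := Set.not_subset.mp h.1
  obtain ⟨b, hbS, hbB⟩ := Set.not_subset.mp h.2
  have hne := isPreconnected_closed_iff.mp hS A B hA hB hsub
    ⟨b, hbS, (hsub hbS).resolve_right hbB⟩ ⟨a, haS, (hsub haS).resolve_left haA⟩
  obtain ⟨c, hc⟩ := hne
  rw [← Set.mem_empty_iff_false c, ← hdisj]
  exact hc

/-- In a tripod with legs `L1, L2, L3` meeting pairwise exactly at `t`, any
preconnected subset of the union avoiding `t` lies in a single leg. -/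
lemma leg_absorb {x1 x2 x3 t : X} {L1 L2 L3 S : Set X}
    (g1 : IsGeodesicSeg X L1 x1 t) (g2 : IsGeodesicSeg X L2 x2 t)
    (g3 : IsGeodesicSeg X L3 x3 t)
    (i12 : L1 ∩ L2 = {t}) (i23 : L2 ∩ L3 = {t}) (i13 : L1 ∩ L3 = {t})
    (hS : IsPreconnected S) (hsub : S ⊆ L1 ∪ L2 ∪ L3) (ht : t ∉ S) :
    ∃ (v : X) (L : Set X), IsGeodesicSeg X L v t ∧ S ⊆ L ∧
      (L = L1 ∨ L = L2 ∨ L = L3) := by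
  have c1 := geo_closed g1
  have c2 := geo_closed g2
  have c3 := geo_closed g3
  have hsub' : S ⊆ L1 ∪ (L2 ∪ L3) := by rwa [← Set.union_assoc]
  have step1 : S ⊆ L1 ∨ S ⊆ L2 ∪ L3 := by
    apply preconn_split hS c1 (c2.union c3) hsub'
    ext p
    simp only [Set.mem_inter_iff, Set.mem_union, Set.mem_empty_iff_false, iff_false]
    rintro ⟨hpS, hp1, hp2 | hp3⟩
    · exact ht (by
        have : p ∈ L1 ∩ L2 := ⟨hp1, hp2⟩
        rw [i12] at this
        rwa [← this])
    · exact ht (by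
        have : p ∈ L1 ∩ L3 := ⟨hp1, hp3⟩
        rw [i13] at this
        rwa [← this])
  rcases step1 with h | h
  · exact ⟨x1, L1, g1, h, Or.inl rfl⟩
  have step2 : S ⊆ L2 ∨ S ⊆ L3 := by
    apply preconn_split hS c2 c3 h
    ext p
    simp only [Set.mem_inter_iff, Set.mem_empty_iff_false, iff_false]
    rintro ⟨hpS, hp2, hp3⟩
    exact ht (by
      have : p ∈ L2 ∩ L3 := ⟨hp2, hp3⟩
      rw [i23] at this
      rwa [← this])
  rcases step2 with h2 | h3
  · exact ⟨x2, L2, g2, h2, Or.inr (Or.inl rfl)⟩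
  · exact ⟨x3, L3, g3, h3, Or.inr (Or.inr rfl)⟩

lemma leg_eq {t : X} {L1 L2 L3 L L' : Set X} {p : X}
    (i12 : L1 ∩ L2 = {t}) (i23 : L2 ∩ L3 = {t}) (i13 : L1 ∩ L3 = {t})
    (hL : L = L1 ∨ L = L2 ∨ L = L3) (hL' : L' = L1 ∨ L' = L2 ∨ L' = L3)
    (hp : p ∈ L) (hp' : p ∈ L') (hpt : p ≠ t) : L = L' := by
  have key : ∀ (A B : Set X), A ∩ B = {t} → p ∈ A → p ∈ B → False := by
    intro A B hAB hA hB
    apply hpt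
    have : p ∈ A ∩ B := ⟨hA, hB⟩
    rwa [hAB] at this
  rcases hL with rfl | rfl | rfl <;> rcases hL' with rfl | rfl | rfl
  · rfl
  · exact absurd (key _ _ i12 hp hp') not_false
  · exact absurd (key _ _ i13 hp hp') not_false
  · exact absurd (key _ _ i12 hp' hp) not_false
  · rfl
  · exact absurd (key _ _ i23 hp hp') not_false
  · exact absurd (key _ _ i13 hp' hp) not_false
  · exact absurd (key _ _ i23 hp' hp) not_false
  · rfl

/-- Two points of a leg that differ from the tip `t` cannot have `t` on a
geodesic between them. -/
lemma metric_contra {v t a b : X} {L sab : Set X}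
    (gL : IsGeodesicSeg X L v t) (gab : IsGeodesicSeg X sab a b)
    (htab : t ∈ sab) (haL : a ∈ L) (hbL : b ∈ L) (hat : a ≠ t) (hbt : b ≠ t) :
    False := by
  have h1 : dist a t + dist t b = dist a b := geo_add gab htab
  have h2 : dist a b = |dist a t - dist b t| := geo_dist_right gL haL hbL
  have hat' : 0 < dist a t := dist_pos.mpr hat
  have hbt' : 0 < dist b t := dist_pos.mpr hbt
  have hc : dist t b = dist b t := dist_comm _ _
  rcases abs_cases (dist a t - dist b t) with ⟨he, _⟩ | ⟨he, _⟩ <;> rw [he] at h2 <;> linarith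

lemma median_core {x y z x1 x2 x3 t : X} {sxy syz szx L1 L2 L3 : Set X}
    (gxy : IsGeodesicSeg X sxy x y) (gyz : IsGeodesicSeg X syz y z)
    (gzx : IsGeodesicSeg X szx z x)
    (g1 : IsGeodesicSeg X L1 x1 t) (g2 : IsGeodesicSeg X L2 x2 t)
    (g3 : IsGeodesicSeg X L3 x3 t)
    (i12 : L1 ∩ L2 = {t}) (i23 : L2 ∩ L3 = {t}) (i13 : L1 ∩ L3 = {t})
    (hU : sxy ∪ syz ∪ szx = L1 ∪ L2 ∪ L3)
    (hxy : t ∉ sxy) :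
    ∃ m, dist x y = dist x m + dist m y ∧ dist y z = dist y m + dist m z ∧
      dist x z = dist x m + dist m z := by
  have hsub : sxy ⊆ L1 ∪ L2 ∪ L3 := by
    rw [← hU]; intro p hp; exact Or.inl (Or.inl hp)
  obtain ⟨v, L, gL, hL, hone⟩ :=
    leg_absorb g1 g2 g3 i12 i23 i13 (geo_preconn gxy) hsub hxy
  have xL : x ∈ L := hL (geo_mem_left gxy)
  have yL : y ∈ L := hL (geo_mem_right gxy)
  have hxt : x ≠ t := fun h => hxy (h ▸ geo_mem_left gxy)
  have hyt : y ≠ t := fun h => hxy (h ▸ geo_mem_right gxy)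
  have tU : t ∈ sxy ∪ syz ∪ szx := by
    rw [hU]; exact Or.inl (Or.inl (geo_mem_right g1))
  have hyz : t ∈ syz := by
    by_contra hyzn
    have hsub2 : syz ⊆ L1 ∪ L2 ∪ L3 := by
      rw [← hU]; intro p hp; exact Or.inl (Or.inr hp)
    obtain ⟨v', L', gL', hL', hone'⟩ :=
      leg_absorb g1 g2 g3 i12 i23 i13 (geo_preconn gyz) hsub2 hyzn
    have hLL : L = L' := leg_eq i12 i23 i13 hone hone' yL (hL' (geo_mem_left gyz)) hyt
    have zL : z ∈ L := by rw [hLL]; exact hL' (geo_mem_right gyz)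
    have hzt : z ≠ t := fun h => hyzn (h ▸ geo_mem_right gyz)
    by_cases hzx : t ∈ szx
    · exact metric_contra gL gzx hzx zL xL hzt hxt
    · rcases tU with (h | h) | h
      · exact hxy h
      · exact hyzn h
      · exact hzx h
  have hzx : t ∈ szx := by
    by_contra hzxn
    have hsub3 : szx ⊆ L1 ∪ L2 ∪ L3 := by
      rw [← hU]; intro p hp; exact Or.inr hp
    obtain ⟨v', L', gL', hL', hone'⟩ :=
      leg_absorb g1 g2 g3 i12 i23 i13 (geo_preconn gzx) hsub3 hzxn
    have hLL : L = L' := leg_eq i12 i23 i13 hone hone' xL (hL' (geo_mem_right gzx)) hxt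
    have zL : z ∈ L := by rw [hLL]; exact hL' (geo_mem_left gzx)
    have hzt : z ≠ t := fun h => hzxn (h ▸ geo_mem_left gzx)
    exact metric_contra gL gyz hyz yL zL hyt hzt
  have hpair : dist x y = |dist x t - dist y t| := geo_dist_right gL xL yL
  have ha1 : dist y t + dist t z = dist y z := geo_add gyz hyz
  have ha2 : dist z t + dist t x = dist z x := geo_add gzx hzx
  have c1 := dist_comm x z
  have c2 := dist_comm z t
  have c3 := dist_comm t x
  have c4 := dist_comm t z
  have c5 := dist_comm x y
  rcases le_total (dist y t) (dist x t) with hc | hc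
  · refine ⟨y, by simp, by simp, ?_⟩
    have hxy' : dist x y = dist x t - dist y t := by
      rw [hpair]; exact abs_of_nonneg (by linarith)
    linarith
  · refine ⟨x, by simp, ?_, by simp⟩
    have hxy' : dist x y = dist y t - dist x t := by
      rw [hpair, abs_sub_comm]; exact abs_of_nonneg (by linarith)
    have c6 := dist_comm y x
    linarith

lemma exists_median (hX : IsMetricTree X) (x y z : X) :
    ∃ m, dist x y = dist x m + dist m y ∧ dist y z = dist y m + dist m z ∧
      dist x z = dist x m + dist m z := by
  obtain ⟨sxy, gxy⟩ := hX.1 x y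
  obtain ⟨syz, gyz⟩ := hX.1 y z
  obtain ⟨szx, gzx⟩ := hX.1 z x
  obtain ⟨x1, x2, x3, t, L1, L2, L3, g1, g2, g3, i12, i23, i13, hU⟩ :=
    hX.2 x y z sxy syz szx gxy gyz gzx
  by_cases hxy : t ∈ sxy
  · by_cases hyz : t ∈ syz
    · by_cases hzx : t ∈ szx
      · refine ⟨t, (geo_add gxy hxy).symm, (geo_add gyz hyz).symm, ?_⟩
        have h := geo_add gzx hzx
        have c1 := dist_comm x z
        have c2 := dist_comm z t
        have c3 := dist_comm t x
        linarith
      · -- rotate to (z, x, y)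
        have hU' : szx ∪ sxy ∪ syz = L1 ∪ L2 ∪ L3 := by
          rw [← hU]; ext p; simp only [Set.mem_union]; tauto
        obtain ⟨m, h1, h2, h3⟩ :=
          median_core gzx gxy gyz g1 g2 g3 i12 i23 i13 hU' hzx
        refine ⟨m, h2, ?_, ?_⟩
        · have c1 := dist_comm z y
          have c2 := dist_comm z m
          have c3 := dist_comm m y
          have c4 := dist_comm y z
          have c5 := dist_comm y m
          have c6 := dist_comm m z
          linarith
        · have c1 := dist_comm z x
          have c2 := dist_comm z m
          have c3 := dist_comm m x
          have c4 := dist_comm x z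
          have c5 := dist_comm x m
          have c6 := dist_comm m z
          linarith
    · -- rotate to (y, z, x)
      have hU' : syz ∪ szx ∪ sxy = L1 ∪ L2 ∪ L3 := by
        rw [← hU]; ext p; simp only [Set.mem_union]; tauto
      obtain ⟨m, h1, h2, h3⟩ :=
        median_core gyz gzx gxy g1 g2 g3 i12 i23 i13 hU' hyz
      refine ⟨m, ?_, h1, ?_⟩
      · have c1 := dist_comm y x
        have c2 := dist_comm y m
        have c3 := dist_comm m x
        have c4 := dist_comm x y
        have c5 := dist_comm x m
        have c6 := dist_comm m y
        linarith
      · have c1 := dist_comm z x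
        have c2 := dist_comm z m
        have c3 := dist_comm m x
        have c4 := dist_comm x z
        have c5 := dist_comm x m
        have c6 := dist_comm m z
        linarith
  · exact median_core gxy gyz gzx g1 g2 g3 i12 i23 i13 hU hxy

/-- In a metric tree, geodesic segments between two given points are unique. -/
lemma geo_unique (hX : IsMetricTree X) {w z : X} {s s' : Set X}
    (g : IsGeodesicSeg X s w z) (g' : IsGeodesicSeg X s' w z) : s = s' := by
  -- keep copies of the bundled facts before destructing
  have gc := g
  have gc' := g'
  obtain ⟨γ, h0, hD, hiso, him⟩ := g
  obtain ⟨γ', h0', hD', hiso', him'⟩ := g'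
  set D := dist w z with hDdef
  have hDn : 0 ≤ D := dist_nonneg
  obtain ⟨x1, x2, x3, t, L1, L2, L3, g1, g2, g3, i12, i23, i13, hU⟩ :=
    hX.2 w z z s {z} s' gc (geo_singleton z) (geo_rev gc')
  have hzs : z ∈ s := geo_mem_right gc
  have tU : t ∈ s ∪ {z} ∪ s' := by
    rw [hU]; exact Or.inl (Or.inl (geo_mem_right g1))
  -- distance-based facts inside s and s'
  have hdistγ : ∀ a ∈ Set.Icc (0:ℝ) D, ∀ b ∈ Set.Icc (0:ℝ) D,
      dist (γ a) (γ b) = |a - b| := hiso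
  -- `t` lies on both geodesics
  have key_t : ∀ (u u' : Set X) (γu γu' : ℝ → X),
      (IsGeodesicSeg X u w z) → (IsGeodesicSeg X u' w z) →
      u ∪ {z} ∪ u' ⊆ L1 ∪ L2 ∪ L3 → t ∈ u ∪ {z} ∪ u' → t ∉ u → False := by
    intro u u' γu γu' gu gu' husub htu htnu
    obtain ⟨v, L, gL, hL, hone⟩ := leg_absorb g1 g2 g3 i12 i23 i13
      (geo_preconn gu) (fun p hp => husub (Or.inl (Or.inl hp))) htnu
    have hwL : w ∈ L := hL (geo_mem_left gu)
    have hzL : z ∈ L := hL (geo_mem_right gu)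
    have hwt : w ≠ t := fun h => htnu (h ▸ geo_mem_left gu)
    have hzt : z ≠ t := fun h => htnu (h ▸ geo_mem_right gu)
    by_cases htu' : t ∈ u'
    · exact metric_contra gL gu' htu' hwL hzL hwt hzt
    · rcases htu with (h | h) | h
      · exact htnu h
      · exact hzt (Set.mem_singleton_iff.mp h).symm
      · exact htu' h
  have hUsub : s ∪ {z} ∪ s' ⊆ L1 ∪ L2 ∪ L3 := by rw [hU]
  have hts : t ∈ s := by
    by_contra h
    exact key_t s s' γ γ' gc gc' hUsub tU h
  have hts' : t ∈ s' := by
    by_contra h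
    have tU' : t ∈ s' ∪ {z} ∪ s := by
      rcases tU with (hh | hh) | hh
      · exact Or.inr hh
      · exact Or.inl (Or.inr hh)
      · exact Or.inl (Or.inl hh)
    have hUsub' : s' ∪ {z} ∪ s ⊆ L1 ∪ L2 ∪ L3 := by
      intro p hp
      apply hUsub
      rcases hp with (hh | hh) | hh
      · exact Or.inr hh
      · exact Or.inl (Or.inr hh)
      · exact Or.inl (Or.inl hh)
    exact key_t s' s γ' γ gc' gc hUsub' tU' h
  -- the parameter of t on each geodesic is dist w t
  have hparam : ∀ (γu : ℝ → X), γu 0 = w →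
      (∀ a ∈ Set.Icc (0:ℝ) D, ∀ b ∈ Set.Icc (0:ℝ) D, dist (γu a) (γu b) = |a-b|) →
      ∀ a ∈ Set.Icc (0:ℝ) D, dist w (γu a) = a := by
    intro γu hu0 huiso a ha
    have h := huiso 0 ⟨le_refl _, hDn⟩ a ha
    rw [hu0] at h
    rw [h, abs_sub_comm]
    simpa using abs_of_nonneg ha.1
  obtain ⟨c, hc, hct⟩ : ∃ c ∈ Set.Icc (0:ℝ) D, γ c = t := by
    rw [him] at hts; obtain ⟨c, hc, hct⟩ := hts; exact ⟨c, hc, hct⟩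
  obtain ⟨c', hc', hct'⟩ : ∃ c' ∈ Set.Icc (0:ℝ) D, γ' c' = t := by
    rw [him'] at hts'; obtain ⟨c', hc', hct'⟩ := hts'; exact ⟨c', hc', hct'⟩
  have hcc : c = c' := by
    have h1 : dist w (γ c) = c := hparam γ h0 hiso c hc
    have h2 : dist w (γ' c') = c' := hparam γ' h0' hiso' c' hc'
    rw [hct] at h1; rw [hct'] at h2; rw [← h1, ← h2]
  subst hcc
  -- pointwise agreement
  have key : ∀ e ∈ Set.Icc (0:ℝ) D, γ e = γ' e := by
    intro e he
    rcases lt_trichotomy e c with hlt | heq | hgt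
    · -- both points at distance c - e from t, on a common leg
      set S := γ '' Set.Icc 0 e ∪ γ' '' Set.Icc 0 e with hS
      have hSpre : IsPreconnected S := by
        apply IsPreconnected.union w
        · exact ⟨0, ⟨le_refl _, he.1⟩, h0⟩
        · exact ⟨0, ⟨le_refl _, he.1⟩, h0'⟩
        · have : LipschitzOnWith 1 γ (Set.Icc 0 e) := by
            rw [lipschitzOnWith_iff_dist_le_mul]
            intro a ha b hb
            rw [hiso a ⟨ha.1, le_trans ha.2 he.2⟩ b ⟨hb.1, le_trans hb.2 he.2⟩, Real.dist_eq]
            simp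
          exact isPreconnected_Icc.image γ this.continuousOn
        · have : LipschitzOnWith 1 γ' (Set.Icc 0 e) := by
            rw [lipschitzOnWith_iff_dist_le_mul]
            intro a ha b hb
            rw [hiso' a ⟨ha.1, le_trans ha.2 he.2⟩ b ⟨hb.1, le_trans hb.2 he.2⟩, Real.dist_eq]
            simp
          exact isPreconnected_Icc.image γ' this.continuousOn
      have hSsub : S ⊆ L1 ∪ L2 ∪ L3 := by
        intro p hp
        apply hUsub
        rcases hp with hh | hh
        · refine Or.inl (Or.inl ?_)
          rw [him]
          obtain ⟨a, ha, rfl⟩ := hh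
          exact ⟨a, ⟨ha.1, le_trans ha.2 he.2⟩, rfl⟩
        · refine Or.inr ?_
          rw [him']
          obtain ⟨a, ha, rfl⟩ := hh
          exact ⟨a, ⟨ha.1, le_trans ha.2 he.2⟩, rfl⟩
      have htS : t ∉ S := by
        rintro (⟨a, ha, hat⟩ | ⟨a, ha, hat⟩)
        · have : dist (γ a) (γ c) = c - a := by
            rw [hiso a ⟨ha.1, le_trans ha.2 he.2⟩ c hc, abs_sub_comm]
            exact abs_of_nonneg (by linarith [ha.2])
          rw [hat, hct, dist_self] at this
          linarith [ha.2]
        · have : dist (γ' a) (γ' c) = c - a := by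
            rw [hiso' a ⟨ha.1, le_trans ha.2 he.2⟩ c hc', abs_sub_comm]
            exact abs_of_nonneg (by linarith [ha.2])
          rw [hat, hct', dist_self] at this
          linarith [ha.2]
      obtain ⟨v, L, gL, hLsub, _⟩ :=
        leg_absorb g1 g2 g3 i12 i23 i13 hSpre hSsub htS
      have hp1 : γ e ∈ L := hLsub (Or.inl ⟨e, ⟨he.1, le_refl _⟩, rfl⟩)
      have hp2 : γ' e ∈ L := hLsub (Or.inr ⟨e, ⟨he.1, le_refl _⟩, rfl⟩)
      have hd1 : dist (γ e) t = c - e := by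
        rw [← hct, hiso e he c hc, abs_sub_comm]
        exact abs_of_nonneg (by linarith)
      have hd2 : dist (γ' e) t = c - e := by
        rw [← hct', hiso' e he c hc', abs_sub_comm]
        exact abs_of_nonneg (by linarith)
      have := geo_dist_right gL hp1 hp2
      rw [hd1, hd2, sub_self, abs_zero] at this
      exact dist_eq_zero.mp this
    · rw [heq, hct, hct']
    · -- both points at distance e - c from t, on a common leg
      set S := γ '' Set.Icc e D ∪ γ' '' Set.Icc e D with hS
      have hSpre : IsPreconnected S := by
        apply IsPreconnected.union z
        · exact ⟨D, ⟨he.2, le_refl _⟩, hD⟩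
        · exact ⟨D, ⟨he.2, le_refl _⟩, hD'⟩
        · have : LipschitzOnWith 1 γ (Set.Icc e D) := by
            rw [lipschitzOnWith_iff_dist_le_mul]
            intro a ha b hb
            rw [hiso a ⟨le_trans he.1 ha.1, ha.2⟩ b ⟨le_trans he.1 hb.1, hb.2⟩, Real.dist_eq]
            simp
          exact isPreconnected_Icc.image γ this.continuousOn
        · have : LipschitzOnWith 1 γ' (Set.Icc e D) := by
            rw [lipschitzOnWith_iff_dist_le_mul]
            intro a ha b hb
            rw [hiso' a ⟨le_trans he.1 ha.1, ha.2⟩ b ⟨le_trans he.1 hb.1, hb.2⟩, Real.dist_eq]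
            simp
          exact isPreconnected_Icc.image γ' this.continuousOn
      have hSsub : S ⊆ L1 ∪ L2 ∪ L3 := by
        intro p hp
        apply hUsub
        rcases hp with hh | hh
        · refine Or.inl (Or.inl ?_)
          rw [him]
          obtain ⟨a, ha, rfl⟩ := hh
          exact ⟨a, ⟨le_trans he.1 ha.1, ha.2⟩, rfl⟩
        · refine Or.inr ?_
          rw [him']
          obtain ⟨a, ha, rfl⟩ := hh
          exact ⟨a, ⟨le_trans he.1 ha.1, ha.2⟩, rfl⟩
      have htS : t ∉ S := by
        rintro (⟨a, ha, hat⟩ | ⟨a, ha, hat⟩)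
        · have : dist (γ a) (γ c) = a - c := by
            rw [hiso a ⟨le_trans he.1 ha.1, ha.2⟩ c hc]
            exact abs_of_nonneg (by linarith [ha.1])
          rw [hat, hct, dist_self] at this
          linarith [ha.1]
        · have : dist (γ' a) (γ' c) = a - c := by
            rw [hiso' a ⟨le_trans he.1 ha.1, ha.2⟩ c hc']
            exact abs_of_nonneg (by linarith [ha.1])
          rw [hat, hct', dist_self] at this
          linarith [ha.1]
      obtain ⟨v, L, gL, hLsub, _⟩ :=
        leg_absorb g1 g2 g3 i12 i23 i13 hSpre hSsub htS
      have hp1 : γ e ∈ L := hLsub (Or.inl ⟨e, ⟨le_refl _, he.2⟩, rfl⟩)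
      have hp2 : γ' e ∈ L := hLsub (Or.inr ⟨e, ⟨le_refl _, he.2⟩, rfl⟩)
      have hd1 : dist (γ e) t = e - c := by
        rw [← hct, hiso e he c hc]
        exact abs_of_nonneg (by linarith)
      have hd2 : dist (γ' e) t = e - c := by
        rw [← hct', hiso' e he c hc']
        exact abs_of_nonneg (by linarith)
      have := geo_dist_right gL hp1 hp2
      rw [hd1, hd2, sub_self, abs_zero] at this
      exact dist_eq_zero.mp this
  rw [him, him']
  exact Set.image_congr key

/-- Two points metrically between `w` and `z` in a metric tree lie on the
(unique) geodesic, so their mutual distance is the difference of distances. -/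
lemma between_rigid (hX : IsMetricTree X) {w z p q : X}
    (hp : dist w z = dist w p + dist p z) (hq : dist w z = dist w q + dist q z) :
    dist p q = |dist w p - dist w q| := by
  obtain ⟨s1, g1⟩ := hX.1 w p
  obtain ⟨s2, g2⟩ := hX.1 p z
  obtain ⟨s4, g4⟩ := hX.1 w q
  obtain ⟨s5, g5⟩ := hX.1 q z
  have gS : IsGeodesicSeg X (s1 ∪ s2) w z := geo_concat g1 g2 hp
  have gS' : IsGeodesicSeg X (s4 ∪ s5) w z := geo_concat g4 g5 hq
  have heq : s1 ∪ s2 = s4 ∪ s5 := geo_unique hX gS gS'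
  have hpS : p ∈ s1 ∪ s2 := Or.inl (geo_mem_right g1)
  have hqS : q ∈ s1 ∪ s2 := by rw [heq]; exact Or.inl (geo_mem_right g4)
  exact geo_dist_left gS hpS hqS

/-- Ultrametric inequality for the (doubled) Gromov product in a metric tree. -/
lemma gromov_ineq (hX : IsMetricTree X) (w x y z : X) :
    min (dist x w + dist z w - dist x z) (dist y w + dist z w - dist y z)
      ≤ dist x w + dist y w - dist x y := by
  obtain ⟨m2, h21, h22, h23⟩ := exists_median hX x z w
  obtain ⟨m3, h31, h32, h33⟩ := exists_median hX y z w
  -- h21 : dist x z = dist x m2 + dist m2 z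
  -- h22 : dist z w = dist z m2 + dist m2 w
  -- h23 : dist x w = dist x m2 + dist m2 w
  have hb2 : dist w z = dist w m2 + dist m2 z := by
    have c1 := dist_comm w z
    have c2 := dist_comm w m2
    have c3 := dist_comm z m2
    linarith
  have hb3 : dist w z = dist w m3 + dist m3 z := by
    have c1 := dist_comm w z
    have c2 := dist_comm w m3
    have c3 := dist_comm z m3
    linarith
  have hrig : dist m2 m3 = |dist w m2 - dist w m3| := between_rigid hX hb2 hb3
  have htri : dist x y ≤ dist x m2 + dist m2 m3 + dist m3 y := dist_triangle4 x m2 m3 y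
  have e2 : dist x w + dist z w - dist x z = 2 * dist m2 w := by
    have c1 := dist_comm z m2
    have c2 := dist_comm m2 z
    linarith
  have e3 : dist y w + dist z w - dist y z = 2 * dist m3 w := by
    have c1 := dist_comm z m3
    have c2 := dist_comm m3 z
    linarith
  have cw2 := dist_comm w m2
  have cw3 := dist_comm w m3
  have cy3 := dist_comm m3 y
  rcases le_total (dist w m2) (dist w m3) with hcmp | hcmp
  · apply le_trans (min_le_left _ _)
    rw [e2]
    have : dist m2 m3 = dist w m3 - dist w m2 := by
      rw [hrig, abs_sub_comm]; exact abs_of_nonneg (by linarith)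
    linarith
  · apply le_trans (min_le_right _ _)
    rw [e3]
    have : dist m2 m3 = dist w m2 - dist w m3 := by
      rw [hrig]; exact abs_of_nonneg (by linarith)
    linarith

/-- The `k`-th annular cluster around `x` for scale `R` and basepoint `w`. -/
def clsSet {X : Type*} [MetricSpace X] (w : X) (R : ℝ) (k : ℕ) (x : X) : Set X :=
  {u | (2*k*R ≤ dist u w ∧ dist u w < 2*(k+1)*R) ∧
       4*k*R - 2*R < dist x w + dist u w - dist x u}

lemma clsSet_subset (hX : IsMetricTree X) (w : X) (R : ℝ) {k : ℕ} {x x' : X}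
    (h : 4*k*R - 2*R < dist x w + dist x' w - dist x x') :
    clsSet w R k x' ⊆ clsSet w R k x := by
  rintro u ⟨hann, hgp⟩
  refine ⟨hann, ?_⟩
  have hgi := gromov_ineq hX w x u x'
  have h2 : 4*k*R - 2*R < dist u w + dist x' w - dist u x' := by
    have c := dist_comm x' u
    linarith
  calc 4*k*R - 2*R
      < min (dist x w + dist x' w - dist x x') (dist u w + dist x' w - dist u x') :=
        lt_min h h2
    _ ≤ dist x w + dist u w - dist x u := hgi

lemma clsSet_eq (hX : IsMetricTree X) (w : X) (R : ℝ) {k : ℕ} {x x' : X}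
    (h : 4*k*R - 2*R < dist x w + dist x' w - dist x x') :
    clsSet w R k x = clsSet w R k x' := by
  apply Set.eq_of_subset_of_subset
  · apply clsSet_subset hX
    have c1 := dist_comm x x'
    have c2 := dist_comm x' x
    linarith
  · exact clsSet_subset hX w R h

end AuxMetricTree

/-- Every metric tree `T` satisfies `ℓ-asdim T ≤ 1`: there is `C > 0` such that
for every sufficiently large `R > 0` the tree admits a covering by subsets of
diameter at most `C·R` split into two `R`-disjoint families. -/
theorem lasdim_metricTree_le_one (T : Type*) [MetricSpace T]
    (hT : IsMetricTree T) :
    LAsdimLE T 1 ∧ lasdim T ≤ 1 := by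
  have hL : LAsdimLE T 1 := by
    refine ⟨6, by norm_num, 1, by norm_num, ?_⟩
    intro R hR
    have hRpos : (0:ℝ) < R := lt_of_lt_of_le one_pos hR
    by_cases hne : Nonempty T
    · obtain ⟨w⟩ := hne
      refine ⟨fun i => {U | ∃ (k : ℕ) (x : T), k % 2 = i.val ∧ U = clsSet w R k x},
        ?_, ?_, ?_⟩
      · -- coverage
        intro x
        have h2R : (0:ℝ) < 2*R := by linarith
        set k := ⌊dist x w / (2*R)⌋₊ with hk
        have hlo : 2*(k:ℝ)*R ≤ dist x w := by
          have hfl : (k:ℝ) ≤ dist x w / (2*R) :=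
            Nat.floor_le (div_nonneg dist_nonneg h2R.le)
          have := (le_div_iff₀ h2R).mp hfl
          linarith
        have hhi : dist x w < 2*((k:ℝ)+1)*R := by
          have hfl : dist x w / (2*R) < (k:ℝ) + 1 := Nat.lt_floor_add_one _
          have := (div_lt_iff₀ h2R).mp hfl
          linarith
        refine ⟨⟨k % 2, by omega⟩, clsSet w R k x, ⟨k, x, rfl, rfl⟩, ?_⟩
        refine ⟨⟨by push_cast; linarith, by push_cast; linarith⟩, ?_⟩
        have := dist_self x
        push_cast
        linarith
      · -- diameter
        rintro i U ⟨k, x, hk, rfl⟩ u hu u' hu'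
        obtain ⟨⟨hlo, hhi⟩, hgp⟩ := hu
        obtain ⟨⟨hlo', hhi'⟩, hgp'⟩ := hu'
        have hgi := gromov_ineq hT w u u' x
        have h1 : 4*(k:ℝ)*R - 2*R < dist u w + dist x w - dist u x := by
          have c := dist_comm x u
          linarith
        have h2 : 4*(k:ℝ)*R - 2*R < dist u' w + dist x w - dist u' x := by
          have c := dist_comm x u'
          linarith
        have hmin : 4*(k:ℝ)*R - 2*R <
            min (dist u w + dist x w - dist u x) (dist u' w + dist x w - dist u' x) :=
          lt_min h1 h2
        have := lt_of_lt_of_le hmin hgi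
        linarith
      · -- R-disjointness
        rintro i U ⟨k, x, hk, rfl⟩ V ⟨k', x', hk', rfl⟩ hUV u hu u' hu'
        obtain ⟨⟨hlo, hhi⟩, hgp⟩ := hu
        obtain ⟨⟨hlo', hhi'⟩, hgp'⟩ := hu'
        by_cases hkk : k = k'
        · subst hkk
          by_contra hcon
          push_neg at hcon
          apply hUV
          apply clsSet_eq hT
          -- chain of gromov products
          have h2 : 4*(k:ℝ)*R - 2*R < dist u w + dist u' w - dist u u' := by linarith
          have hxu' : 4*(k:ℝ)*R - 2*R < dist x w + dist u' w - dist x u' := by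
            have hgi := gromov_ineq hT w x u' u
            have hb : 4*(k:ℝ)*R - 2*R < dist u' w + dist u w - dist u' u := by
              have c := dist_comm u u'
              linarith
            have := lt_of_lt_of_le (lt_min hgp hb) hgi
            linarith
          have hgi2 := gromov_ineq hT w x x' u'
          have hb2 : 4*(k:ℝ)*R - 2*R < dist x' w + dist u' w - dist x' u' := by
            have c := dist_comm x' u'
            linarith
          have := lt_of_lt_of_le (lt_min hxu' hb2) hgi2
          linarith
        · have hpar : k % 2 = k' % 2 := by rw [hk, hk']
          have htri : dist u' w ≤ dist u' u + dist u w := dist_triangle _ _ _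
          have hcomm : dist u' u = dist u u' := dist_comm _ _
          have htri2 : dist u w ≤ dist u u' + dist u' w := by
            have := dist_triangle u u' w
            linarith
          rcases (by omega : k + 2 ≤ k' ∨ k' + 2 ≤ k) with hlt | hlt
          · have hcast : (k:ℝ) + 2 ≤ (k':ℝ) := by exact_mod_cast hlt
            have hmul : ((k:ℝ) + 2) * R ≤ (k':ℝ) * R :=
              mul_le_mul_of_nonneg_right hcast hRpos.le
            nlinarith
          · have hcast : (k':ℝ) + 2 ≤ (k:ℝ) := by exact_mod_cast hlt
            have hmul : ((k':ℝ) + 2) * R ≤ (k:ℝ) * R :=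
              mul_le_mul_of_nonneg_right hcast hRpos.le
            nlinarith
    · refine ⟨fun _ => ∅, ?_, ?_, ?_⟩
      · intro x; exact absurd ⟨x⟩ hne
      · intro i U hU; exact absurd hU (Set.notMem_empty U)
      · intro i U hU; exact absurd hU (Set.notMem_empty U)
  refine ⟨hL, ?_⟩
  apply sInf_le
  exact ⟨1, by norm_cast, hL⟩
end

section
/- For metric spaces X and Y, the product X × Y equipped with the sum metric satisfies ℓ-asdim(X × Y) ≤ ℓ-asdim X + ℓ-asdim Y. -/
open Metric Set

namespace LasProdAux



lemma grid_cover {ι : Type*} [Fintype ι] (N : ℕ) (hcard : Fintype.card ι ≤ N)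
    (P g L : ℝ) (hP : 0 < P) (hg : g = P / (N + 1)) (hL : L = P - g) (v : ι → ℝ) :
    ∃ c : Fin (N + 1), ∀ r : ι, ∃ a : ℤ,
      0 ≤ v r - ((c : ℝ) * g + a * P) ∧ v r - ((c : ℝ) * g + a * P) ≤ L := by
  classical
  have hNg : P = (N + 1 : ℝ) * g := by
    rw [hg]; field_simp
  have hgpos : 0 < g := by
    rw [hg]; positivity
  by_contra hcon
  push_neg at hcon
  choose rr hrr using hcon
  have key : ∀ c : Fin (N+1), ∀ r : ι, (∀ a : ℤ, 0 ≤ v r - ((c : ℝ) * g + a * P) →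
      L < v r - ((c : ℝ) * g + a * P)) →
      L < v r - ((c : ℝ) * g + (⌊(v r - (c : ℝ) * g) / P⌋ : ℝ) * P) ∧
      v r - ((c : ℝ) * g + (⌊(v r - (c : ℝ) * g) / P⌋ : ℝ) * P) < P := by
    intro c r hbad
    set q : ℝ := (v r - (c : ℝ) * g) / P with hq
    have h0 : (⌊q⌋ : ℝ) ≤ q := Int.floor_le q
    have h1 : q < ⌊q⌋ + 1 := Int.lt_floor_add_one q
    have hqP : q * P = v r - (c : ℝ) * g := by
      rw [hq, div_mul_cancel₀ _ hP.ne']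
    have hlow : 0 ≤ v r - ((c : ℝ) * g + (⌊q⌋ : ℝ) * P) := by nlinarith
    have hup : v r - ((c : ℝ) * g + (⌊q⌋ : ℝ) * P) < P := by nlinarith
    exact ⟨hbad _ hlow, hup⟩
  have hinj : Function.Injective rr := by
    intro c c' hcc
    by_contra hne
    have h1 := key c (rr c) (hrr c)
    have h2 := key c' (rr c) (by rw [hcc]; exact hrr c')
    set t : ℝ := v (rr c) - ((c : ℝ) * g + (⌊(v (rr c) - (c : ℝ) * g) / P⌋ : ℝ) * P) with hht
    set t' : ℝ := v (rr c) - ((c' : ℝ) * g + (⌊(v (rr c) - (c' : ℝ) * g) / P⌋ : ℝ) * P) with hht'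
    set a : ℤ := ⌊(v (rr c) - (c : ℝ) * g) / P⌋
    set a' : ℤ := ⌊(v (rr c) - (c' : ℝ) * g) / P⌋
    set D : ℤ := ((c' : ℤ) - (c : ℤ) + (a' - a) * (N + 1) : ℤ) with hD
    have e : (D : ℝ) * g = t - t' := by
      rw [hD, hht, hht']
      push_cast
      rw [hNg]; ring
    have hb1 : (D : ℝ) * g < g := by
      rw [e]; linarith [h1.2, h2.1, hL.symm ▸ (rfl : L = L)]
    have hb2 : -g < (D : ℝ) * g := by
      rw [e]; linarith [h1.1, h2.2]
    have hDz : D = 0 := by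
      by_contra hDz
      have h1' : (1 : ℝ) ≤ |(D : ℝ)| := by exact_mod_cast Int.one_le_abs hDz
      have : |(D : ℝ) * g| < g := abs_lt.2 ⟨hb2, hb1⟩
      rw [abs_mul, abs_of_pos hgpos] at this
      nlinarith
    have heq : (c' : ℤ) - (c : ℤ) = (a - a') * (N + 1) := by linear_combination hDz
    have hcN : (c : ℤ) < N + 1 := by exact_mod_cast c.isLt
    have hc'N : (c' : ℤ) < N + 1 := by exact_mod_cast c'.isLt
    have hc0 : (0 : ℤ) ≤ (c : ℤ) := Int.ofNat_nonneg _
    have hc0' : (0 : ℤ) ≤ (c' : ℤ) := Int.ofNat_nonneg _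
    have haa : a = a' := by
      by_contra haa
      have h1'' : (1 : ℤ) ≤ |a - a'| := Int.one_le_abs (sub_ne_zero.mpr haa)
      have hbig : (N + 1 : ℤ) ≤ |(a - a') * (N + 1)| := by
        rw [abs_mul, abs_of_nonneg (by positivity : (0:ℤ) ≤ (N : ℤ) + 1)]
        nlinarith
      rw [← heq] at hbig
      have hsmall : |(c' : ℤ) - (c : ℤ)| ≤ N := abs_le.2 ⟨by omega, by omega⟩
      omega
    rw [haa] at heq
    simp only [sub_self, zero_mul] at heq
    exact hne (Fin.ext (by omega))
  have := Fintype.card_le_of_injective rr hinj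
  simp only [Fintype.card_fin] at this
  omega


/-! ### witness color -/

noncomputable def wit (n : ℕ) (s : Fin n → ℝ) : Fin (n + 1) :=
  if h : ∃ i : Fin n, 0 < s i then h.choose.castSucc else Fin.last n

lemma wit_pos {n : ℕ} (s : Fin n → ℝ) (φ : Fin (n + 1) → ℝ) (L : ℝ)
    (hlo : ∀ i : Fin n, s i ≤ φ i.castSucc)
    (hhi : ∀ i : Fin n, φ i.castSucc ≤ s i + L)
    (hsum : ∑ i, φ i = 1) (hnL : (n : ℝ) * L ≤ 1 / 2) :
    0 < φ (wit n s) := by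
  unfold wit
  split
  · rename_i h
    exact lt_of_lt_of_le h.choose_spec (hlo _)
  · rename_i h
    push_neg at h
    have hb : ∑ i : Fin n, φ i.castSucc ≤ (n : ℝ) * L := by
      calc ∑ i : Fin n, φ i.castSucc ≤ ∑ _i : Fin n, L :=
            Finset.sum_le_sum (fun i _ => (hhi i).trans (by linarith [h i]))
        _ = (n : ℝ) * L := by
            simp [Finset.sum_const, nsmul_eq_mul]
    have ht := Fin.sum_univ_castSucc (f := φ)
    rw [ht] at hsum
    linarith

/-! ### partition functions -/

variable {W : Type*} [MetricSpace W]

open Classical in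
noncomputable def fF (ρ : ℝ) (S : Set W) (x : W) : ℝ :=
  if S = ∅ then 0 else max 0 (ρ / 4 - infDist x S)

lemma fF_nonneg (ρ : ℝ) (S : Set W) (x : W) : 0 ≤ fF ρ S x := by
  unfold fF; split
  · exact le_refl 0
  · exact le_max_left _ _

lemma fF_le (ρ : ℝ) (hρ : 0 ≤ ρ) (S : Set W) (x : W) : fF ρ S x ≤ ρ / 4 := by
  unfold fF; split
  · positivity
  · exact max_le (by positivity) (by linarith [infDist_nonneg (s := S) (x := x)])

lemma fF_add_lip (ρ : ℝ) (S : Set W) (x x' : W) : fF ρ S x ≤ fF ρ S x' + dist x x' := by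
  unfold fF; split
  · positivity
  · have h := infDist_le_infDist_add_dist (x := x') (y := x) (s := S)
    apply max_le
    · positivity
    · have : ρ / 4 - infDist x S ≤ (ρ / 4 - infDist x' S) + dist x x' := by
        rw [dist_comm x' x] at h; linarith
      exact this.trans (by gcongr; exact le_max_right _ _)

lemma fF_abs_lip (ρ : ℝ) (S : Set W) (x x' : W) : |fF ρ S x - fF ρ S x'| ≤ dist x x' := by
  rw [abs_sub_le_iff]
  constructor
  · linarith [fF_add_lip ρ S x x']
  · rw [dist_comm]; linarith [fF_add_lip ρ S x' x]

lemma fF_of_mem (ρ : ℝ) (hρ : 0 ≤ ρ) {S : Set W} {x : W} (h : x ∈ S) : fF ρ S x = ρ / 4 := by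
  unfold fF
  rw [if_neg (nonempty_iff_ne_empty.mp ⟨x, h⟩), infDist_zero_of_mem h, sub_zero]
  exact max_eq_right (by positivity)

lemma fF_pos_exists {ρ : ℝ} {S : Set W} {x : W} (h : 0 < fF ρ S x) :
    ∃ u ∈ S, dist x u < ρ / 4 := by
  unfold fF at h
  split at h
  · exact absurd h (lt_irrefl 0)
  · rename_i hS
    have hne : S.Nonempty := nonempty_iff_ne_empty.2 hS
    have hlt : infDist x S < ρ / 4 := by
      rcases le_or_gt (ρ / 4 - infDist x S) 0 with hc | hc
      · rw [max_eq_left hc] at h; exact absurd h (lt_irrefl 0)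
      · linarith
    exact (infDist_lt_iff hne).1 hlt

noncomputable def FFd (ρ : ℝ) {m : ℕ} (S : Fin m → Set W) (x : W) : ℝ :=
  ∑ i, fF ρ (S i) x

noncomputable def phiF (ρ : ℝ) {m : ℕ} (S : Fin m → Set W) (i : Fin m) (x : W) : ℝ :=
  fF ρ (S i) x / FFd ρ S x

lemma FF_ge (ρ : ℝ) (hρ : 0 ≤ ρ) {m : ℕ} (S : Fin m → Set W) {x : W} {i : Fin m}
    (h : x ∈ S i) : ρ / 4 ≤ FFd ρ S x := by
  have h1 : fF ρ (S i) x ≤ ∑ j, fF ρ (S j) x :=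
    Finset.single_le_sum (fun j _ => fF_nonneg ρ (S j) x) (Finset.mem_univ i)
  rw [fF_of_mem ρ hρ h] at h1
  exact h1

lemma FF_pos (ρ : ℝ) (hρ : 0 < ρ) {m : ℕ} (S : Fin m → Set W) {x : W} {i : Fin m}
    (h : x ∈ S i) : 0 < FFd ρ S x :=
  lt_of_lt_of_le (by positivity) (FF_ge ρ hρ.le S h)

lemma FF_abs_lip (ρ : ℝ) {m : ℕ} (S : Fin m → Set W) (x x' : W) :
    |FFd ρ S x - FFd ρ S x'| ≤ (m : ℝ) * dist x x' := by
  unfold FFd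
  rw [← Finset.sum_sub_distrib]
  calc |∑ i, (fF ρ (S i) x - fF ρ (S i) x')| ≤ ∑ i, |fF ρ (S i) x - fF ρ (S i) x'| :=
        Finset.abs_sum_le_sum_abs _ _
    _ ≤ ∑ _i : Fin m, dist x x' := Finset.sum_le_sum (fun i _ => fF_abs_lip ρ (S i) x x')
    _ = (m : ℝ) * dist x x' := by simp [Finset.sum_const, nsmul_eq_mul]

lemma phiF_sum (ρ : ℝ) {m : ℕ} (S : Fin m → Set W) {x : W} (h : 0 < FFd ρ S x) :
    ∑ i, phiF ρ S i x = 1 := by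
  unfold phiF
  rw [← Finset.sum_div]
  exact div_self (ne_of_gt h)

lemma phiF_f_pos (ρ : ℝ) {m : ℕ} (S : Fin m → Set W) {i : Fin m} {x : W}
    (hF : 0 < FFd ρ S x) (h : 0 < phiF ρ S i x) : 0 < fF ρ (S i) x := by
  by_contra hc
  push_neg at hc
  have : phiF ρ S i x ≤ 0 := div_nonpos_of_nonpos_of_nonneg hc hF.le
  linarith

lemma phiF_lip (ρ : ℝ) (hρ : 0 < ρ) {m : ℕ} (S : Fin m → Set W) (i : Fin m) (x x' : W)
    (hx : ρ / 4 ≤ FFd ρ S x) (hx' : ρ / 4 ≤ FFd ρ S x') :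
    |phiF ρ S i x - phiF ρ S i x'| ≤ 4 * (m + 1) / ρ * dist x x' := by
  have hFx : 0 < FFd ρ S x := lt_of_lt_of_le (by positivity) hx
  have hFx' : 0 < FFd ρ S x' := lt_of_lt_of_le (by positivity) hx'
  have hfx' : fF ρ (S i) x' ≤ ∑ j, fF ρ (S j) x' :=
    Finset.single_le_sum (fun j _ => fF_nonneg ρ (S j) x') (Finset.mem_univ i)
  have e : phiF ρ S i x - phiF ρ S i x' =
      (fF ρ (S i) x * FFd ρ S x' - fF ρ (S i) x' * FFd ρ S x) / (FFd ρ S x * FFd ρ S x') := by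
    unfold phiF
    rw [div_sub_div _ _ (ne_of_gt hFx) (ne_of_gt hFx')]
    ring_nf
  have hnum : |fF ρ (S i) x * FFd ρ S x' - fF ρ (S i) x' * FFd ρ S x| ≤
      FFd ρ S x' * ((m + 1 : ℝ) * dist x x') := by
    have e2 : fF ρ (S i) x * FFd ρ S x' - fF ρ (S i) x' * FFd ρ S x =
        (fF ρ (S i) x - fF ρ (S i) x') * FFd ρ S x' + fF ρ (S i) x' * (FFd ρ S x' - FFd ρ S x) := by
      ring
    rw [e2]
    calc |(fF ρ (S i) x - fF ρ (S i) x') * FFd ρ S x' +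
            fF ρ (S i) x' * (FFd ρ S x' - FFd ρ S x)| ≤
        |fF ρ (S i) x - fF ρ (S i) x'| * FFd ρ S x' + fF ρ (S i) x' * |FFd ρ S x' - FFd ρ S x| := by
          refine (abs_add_le _ _).trans ?_
          rw [abs_mul, abs_mul, abs_of_pos hFx',
            abs_of_nonneg (fF_nonneg ρ (S i) x')]
      _ ≤ dist x x' * FFd ρ S x' + FFd ρ S x' * ((m : ℝ) * dist x x') := by
          have h1 := fF_abs_lip ρ (S i) x x'
          have h2 := FF_abs_lip ρ S x' x
          rw [dist_comm x' x] at h2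
          have t1 := mul_le_mul_of_nonneg_right h1 hFx'.le
          have t2 : fF ρ (S i) x' * |FFd ρ S x' - FFd ρ S x| ≤
              FFd ρ S x' * ((m : ℝ) * dist x x') :=
            mul_le_mul hfx' h2 (abs_nonneg _) hFx'.le
          linarith
      _ = FFd ρ S x' * ((m + 1 : ℝ) * dist x x') := by ring
  rw [e, abs_div, abs_of_pos (mul_pos hFx hFx')]
  rw [div_le_iff₀ (mul_pos hFx hFx')]
  calc |fF ρ (S i) x * FFd ρ S x' - fF ρ (S i) x' * FFd ρ S x| ≤
      FFd ρ S x' * ((m + 1 : ℝ) * dist x x') := hnum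
    _ ≤ 4 * (m + 1) / ρ * dist x x' * (FFd ρ S x * FFd ρ S x') := by
        have h6 : 1 ≤ 4 * FFd ρ S x / ρ := by
          rw [le_div_iff₀ hρ]; linarith
        have h7 : (0:ℝ) ≤ FFd ρ S x' * (((m:ℝ) + 1) * dist x x') := by positivity
        calc FFd ρ S x' * (((m:ℝ) + 1) * dist x x')
            = FFd ρ S x' * (((m:ℝ) + 1) * dist x x') * 1 := by ring
          _ ≤ FFd ρ S x' * (((m:ℝ) + 1) * dist x x') * (4 * FFd ρ S x / ρ) :=
              mul_le_mul_of_nonneg_left h6 h7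
          _ = 4 * ((m:ℝ) + 1) / ρ * dist x x' * (FFd ρ S x * FFd ρ S x') := by
              field_simp


/-! ### the product construction -/

lemma dist_L1 {X Y : Type*} [MetricSpace X] [MetricSpace Y] (z w : WithLp 1 (X × Y)) :
    dist z w = dist z.fst w.fst + dist z.snd w.snd := by
  rw [WithLp.prod_dist_eq_add (by norm_num : 0 < (1:ENNReal).toReal)]
  simp [Real.rpow_one]

section Defs

variable {X Y : Type*} [MetricSpace X] [MetricSpace Y]

noncomputable def PhiF (ρ : ℝ) {n k : ℕ} (SX : Fin (n+1) → Set X) (SY : Fin (k+1) → Set Y)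
    (r : Fin n ⊕ Fin k) (z : WithLp 1 (X × Y)) : ℝ :=
  Sum.elim (fun i => phiF ρ SX i.castSucc z.fst) (fun j => phiF ρ SY j.castSucc z.snd) r

def loF (g P : ℝ) {n k : ℕ} (c : ℕ) (a : Fin n ⊕ Fin k → ℤ) (r : Fin n ⊕ Fin k) : ℝ :=
  (c : ℝ) * g + (a r : ℝ) * P

noncomputable def iWit (g P : ℝ) {n k : ℕ} (c : ℕ) (a : Fin n ⊕ Fin k → ℤ) : Fin (n+1) :=
  wit n (fun i => loF g P c a (Sum.inl i))

noncomputable def jWit (g P : ℝ) {n k : ℕ} (c : ℕ) (a : Fin n ⊕ Fin k → ℤ) : Fin (k+1) :=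
  wit k (fun j => loF g P c a (Sum.inr j))

noncomputable def WSet (ρ g P L : ℝ) {n k : ℕ} (SX : Fin (n+1) → Set X) (SY : Fin (k+1) → Set Y)
    (c : ℕ) (a : Fin n ⊕ Fin k → ℤ) (U : Set X) (V : Set Y) : Set (WithLp 1 (X × Y)) :=
  {z | (∀ r, PhiF ρ SX SY r z ∈ Icc (loF g P c a r) (loF g P c a r + L)) ∧
    infDist z.fst U < ρ / 4 ∧ infDist z.snd V < ρ / 4}

end Defs

set_option maxHeartbeats 1000000 in
lemma key {X Y : Type*} [MetricSpace X] [MetricSpace Y] {n k : ℕ}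
    (hX : LAsdimLE X n) (hY : LAsdimLE Y k) : LAsdimLE (WithLp 1 (X × Y)) (n + k) := by
  classical
  obtain ⟨Cx, hCx, Rx, hRx, hXc⟩ := hX
  obtain ⟨Cy, hCy, Ry, hRy, hYc⟩ := hY
  obtain ⟨M, hM⟩ : ∃ M : ℕ, M = max n k := ⟨_, rfl⟩
  obtain ⟨P, hPdef⟩ : ∃ P : ℝ, P = 1 / (4 * ((n + k : ℕ) + 1) * ((M : ℝ) + 1)) := ⟨_, rfl⟩
  obtain ⟨g, hgdef⟩ : ∃ g : ℝ, g = P / ((n + k : ℕ) + 1) := ⟨_, rfl⟩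
  obtain ⟨L, hLdef⟩ : ∃ L : ℝ, L = P - g := ⟨_, rfl⟩
  obtain ⟨κ, hκdef⟩ : ∃ x : ℝ, x = 4 * ((M : ℝ) + 2) := ⟨_, rfl⟩
  have hnk1 : (1:ℝ) ≤ ((n + k : ℕ) : ℝ) + 1 := by
    have := Nat.cast_nonneg (α := ℝ) (n + k); linarith
  have hPpos : 0 < P := by rw [hPdef]; positivity
  have hgpos : 0 < g := by rw [hgdef]; positivity
  have hgP : g ≤ P := by
    rw [hgdef]
    exact div_le_self hPpos.le hnk1
  have hL0 : 0 ≤ L := by rw [hLdef]; linarith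
  have hP1 : P ≤ 1 := by
    rw [hPdef, div_le_one (by positivity)]
    have h2 : (1:ℝ) ≤ (M : ℝ) + 1 := by
      have := Nat.cast_nonneg (α := ℝ) M; linarith
    nlinarith
  have hg1 : g ≤ 1 := hgP.trans hP1
  have hκ8 : 8 ≤ κ := by
    rw [hκdef]
    have : (0:ℝ) ≤ (M : ℝ) := Nat.cast_nonneg M
    linarith
  have hκpos : 0 < κ := by linarith
  have hnM : (n : ℝ) ≤ (M : ℝ) := by rw [hM]; exact_mod_cast le_max_left n k
  have hkM : (k : ℝ) ≤ (M : ℝ) := by rw [hM]; exact_mod_cast le_max_right n k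
  have hPM : ((M : ℝ) + 1) * P ≤ 1 / 4 := by
    rw [hPdef, mul_one_div, div_le_div_iff₀ (by positivity) (by norm_num)]
    nlinarith [Nat.cast_nonneg (α := ℝ) M]
  have hnL : (n : ℝ) * L ≤ 1 / 2 := by
    have h1 : (n : ℝ) * L ≤ (n : ℝ) * P :=
      mul_le_mul_of_nonneg_left (by rw [hLdef]; linarith) (Nat.cast_nonneg n)
    have h2 : (n : ℝ) * P ≤ ((M : ℝ) + 1) * P :=
      mul_le_mul_of_nonneg_right (by linarith) hPpos.le
    linarith
  have hkL : (k : ℝ) * L ≤ 1 / 2 := by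
    have h1 : (k : ℝ) * L ≤ (k : ℝ) * P :=
      mul_le_mul_of_nonneg_left (by rw [hLdef]; linarith) (Nat.cast_nonneg k)
    have h2 : (k : ℝ) * P ≤ ((M : ℝ) + 1) * P :=
      mul_le_mul_of_nonneg_right (by linarith) hPpos.le
    linarith
  have h2κg : 2 ≤ 2 * κ / g := by
    rw [le_div_iff₀ hgpos]
    nlinarith
  refine ⟨(Cx + Cy + 1) * (2 * κ / g), by positivity, max Rx Ry,
    lt_of_lt_of_le hRx (le_max_left _ _), ?_⟩
  intro R hR
  have hRpos : 0 < R := lt_of_lt_of_le hRx ((le_max_left _ _).trans hR)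
  obtain ⟨ρ, hρdef⟩ : ∃ x : ℝ, x = 2 * κ / g * R := ⟨_, rfl⟩
  have hρpos : 0 < ρ := by rw [hρdef]; positivity
  have h2Rρ : 2 * R ≤ ρ := by
    rw [hρdef]
    nlinarith
  have hRρ : R ≤ ρ := by linarith
  obtain ⟨Bx, covx, diamx, sepx⟩ := hXc ρ (le_trans (le_trans (le_max_left Rx Ry) hR) hRρ)
  obtain ⟨By, covy, diamy, sepy⟩ := hYc ρ (le_trans (le_trans (le_max_right Rx Ry) hR) hRρ)
  obtain ⟨SX, hSXdef⟩ : ∃ S : Fin (n+1) → Set X, S = fun i => ⋃₀ (Bx i) := ⟨_, rfl⟩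
  obtain ⟨SY, hSYdef⟩ : ∃ S : Fin (k+1) → Set Y, S = fun j => ⋃₀ (By j) := ⟨_, rfl⟩
  have covSX : ∀ x : X, ∃ i, x ∈ SX i := by
    intro x
    obtain ⟨i, U, hU, hx⟩ := covx x
    exact ⟨i, by simp only [hSXdef]; exact ⟨U, hU, hx⟩⟩
  have covSY : ∀ y : Y, ∃ j, y ∈ SY j := by
    intro y
    obtain ⟨j, V, hV, hy⟩ := covy y
    exact ⟨j, by simp only [hSYdef]; exact ⟨V, hV, hy⟩⟩
  have FXge : ∀ x : X, ρ / 4 ≤ FFd ρ SX x := by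
    intro x
    obtain ⟨i, hi⟩ := covSX x
    exact FF_ge ρ hρpos.le SX hi
  have FYge : ∀ y : Y, ρ / 4 ≤ FFd ρ SY y := by
    intro y
    obtain ⟨j, hj⟩ := covSY y
    exact FF_ge ρ hρpos.le SY hj
  have FXpos : ∀ x : X, 0 < FFd ρ SX x := fun x => lt_of_lt_of_le (by positivity) (FXge x)
  have FYpos : ∀ y : Y, 0 < FFd ρ SY y := fun y => lt_of_lt_of_le (by positivity) (FYge y)
  refine ⟨fun c => {T | ∃ (a : Fin n ⊕ Fin k → ℤ) (U : Set X) (V : Set Y),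
      U ∈ Bx (iWit g P (c : ℕ) a) ∧ V ∈ By (jWit g P (c : ℕ) a) ∧ U.Nonempty ∧ V.Nonempty ∧
      T = WSet ρ g P L SX SY (c : ℕ) a U V}, ?_, ?_, ?_⟩
  · -- coverage
    intro z
    obtain ⟨c, hc⟩ := grid_cover (n + k) (by simp) P g L hPpos hgdef hLdef
      (fun r => PhiF ρ SX SY r z)
    choose a ha using hc
    have hcube : ∀ r, PhiF ρ SX SY r z ∈ Icc (loF g P (c : ℕ) a r) (loF g P (c : ℕ) a r + L) := by
      intro r
      obtain ⟨h1, h2⟩ := ha r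
      constructor
      · unfold loF; linarith
      · unfold loF; linarith
    have hsumX : ∑ i, phiF ρ SX i z.fst = 1 := phiF_sum ρ SX (FXpos z.fst)
    have hwitX : 0 < phiF ρ SX (iWit g P (c : ℕ) a) z.fst := by
      refine wit_pos (fun i => loF g P (c : ℕ) a (Sum.inl i)) (fun i => phiF ρ SX i z.fst) L
        ?_ ?_ hsumX hnL
      · intro i
        have := (hcube (Sum.inl i)).1
        simpa [PhiF] using this
      · intro i
        have := (hcube (Sum.inl i)).2
        simpa [PhiF] using this
    have hsumY : ∑ j, phiF ρ SY j z.snd = 1 := phiF_sum ρ SY (FYpos z.snd)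
    have hwitY : 0 < phiF ρ SY (jWit g P (c : ℕ) a) z.snd := by
      refine wit_pos (fun j => loF g P (c : ℕ) a (Sum.inr j)) (fun j => phiF ρ SY j z.snd) L
        ?_ ?_ hsumY hkL
      · intro j
        have := (hcube (Sum.inr j)).1
        simpa [PhiF] using this
      · intro j
        have := (hcube (Sum.inr j)).2
        simpa [PhiF] using this
    have hfX : 0 < fF ρ (SX (iWit g P (c : ℕ) a)) z.fst := phiF_f_pos ρ SX (FXpos z.fst) hwitX
    have hfY : 0 < fF ρ (SY (jWit g P (c : ℕ) a)) z.snd := phiF_f_pos ρ SY (FYpos z.snd) hwitY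
    obtain ⟨u, huS, hu⟩ := fF_pos_exists hfX
    obtain ⟨v, hvS, hv⟩ := fF_pos_exists hfY
    simp only [hSXdef] at huS
    simp only [hSYdef] at hvS
    obtain ⟨U, hU, huU⟩ := huS
    obtain ⟨V, hV, hvV⟩ := hvS
    refine ⟨c, WSet ρ g P L SX SY (c : ℕ) a U V, ⟨a, U, V, hU, hV, ⟨u, huU⟩, ⟨v, hvV⟩, rfl⟩, ?_⟩
    exact ⟨hcube, lt_of_le_of_lt (infDist_le_dist_of_mem huU) hu,
      lt_of_le_of_lt (infDist_le_dist_of_mem hvV) hv⟩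
  · -- diameter
    intro c T hT z hz w hw
    obtain ⟨a, U, V, hU, hV, hUne, hVne, rfl⟩ := hT
    obtain ⟨hzc, hzU, hzV⟩ := hz
    obtain ⟨hwc, hwU, hwV⟩ := hw
    obtain ⟨u, huU, hu⟩ := (infDist_lt_iff hUne).1 hzU
    obtain ⟨u', huU', hu'⟩ := (infDist_lt_iff hUne).1 hwU
    obtain ⟨v, hvV, hv⟩ := (infDist_lt_iff hVne).1 hzV
    obtain ⟨v', hvV', hv'⟩ := (infDist_lt_iff hVne).1 hwV
    have hdx : dist z.fst w.fst ≤ ρ / 4 + Cx * ρ + ρ / 4 := by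
      have h4 := dist_triangle4 z.fst u u' w.fst
      have hd := diamx _ U hU u huU u' huU'
      have hcomm : dist u' w.fst = dist w.fst u' := dist_comm _ _
      linarith
    have hdy : dist z.snd w.snd ≤ ρ / 4 + Cy * ρ + ρ / 4 := by
      have h4 := dist_triangle4 z.snd v v' w.snd
      have hd := diamy _ V hV v hvV v' hvV'
      have hcomm : dist v' w.snd = dist w.snd v' := dist_comm _ _
      linarith
    have hCR : (Cx + Cy + 1) * (2 * κ / g) * R = (Cx + Cy + 1) * ρ := by
      rw [hρdef]; ring
    rw [dist_L1, hCR]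
    linarith
  · -- separation
    intro c T hT T' hT' hTT' z hz z' hz'
    obtain ⟨a, U, V, hU, hV, hUne, hVne, rfl⟩ := hT
    obtain ⟨a', U', V', hU', hV', hU'ne, hV'ne, rfl⟩ := hT'
    by_contra hcon
    push_neg at hcon
    apply hTT'
    obtain ⟨hzc, hzU, hzV⟩ := hz
    obtain ⟨hz'c, hz'U, hz'V⟩ := hz'
    have hdx : dist z.fst z'.fst ≤ dist z z' := by
      rw [dist_L1]; linarith [dist_nonneg (x := z.snd) (y := z'.snd)]
    have hdy : dist z.snd z'.snd ≤ dist z z' := by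
      rw [dist_L1]; linarith [dist_nonneg (x := z.fst) (y := z'.fst)]
    have hκρ : κ / ρ * R = g / 2 := by
      rw [hρdef]
      field_simp
    have coord : ∀ r, |PhiF ρ SX SY r z - PhiF ρ SX SY r z'| < g := by
      intro r
      have hcρ : (0:ℝ) ≤ κ / ρ := by positivity
      have hle : |PhiF ρ SX SY r z - PhiF ρ SX SY r z'| ≤ κ / ρ * dist z z' := by
        cases r with
        | inl i =>
          simp only [PhiF, Sum.elim_inl]
          have h1 := phiF_lip ρ hρpos SX i.castSucc z.fst z'.fst (FXge _) (FXge _)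
          have hc1 : 4 * (((n + 1 : ℕ) : ℝ) + 1) / ρ ≤ κ / ρ := by
            gcongr
            push_cast
            rw [hκdef]
            linarith
          calc |phiF ρ SX i.castSucc z.fst - phiF ρ SX i.castSucc z'.fst|
              ≤ 4 * (((n + 1 : ℕ) : ℝ) + 1) / ρ * dist z.fst z'.fst := h1
            _ ≤ κ / ρ * dist z z' := mul_le_mul hc1 hdx dist_nonneg hcρ
        | inr j =>
          simp only [PhiF, Sum.elim_inr]
          have h1 := phiF_lip ρ hρpos SY j.castSucc z.snd z'.snd (FYge _) (FYge _)
          have hc1 : 4 * (((k + 1 : ℕ) : ℝ) + 1) / ρ ≤ κ / ρ := by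
            gcongr
            push_cast
            rw [hκdef]
            linarith
          calc |phiF ρ SY j.castSucc z.snd - phiF ρ SY j.castSucc z'.snd|
              ≤ 4 * (((k + 1 : ℕ) : ℝ) + 1) / ρ * dist z.snd z'.snd := h1
            _ ≤ κ / ρ * dist z z' := mul_le_mul hc1 hdy dist_nonneg hcρ
      have h2 : κ / ρ * dist z z' ≤ κ / ρ * R := mul_le_mul_of_nonneg_left hcon.le hcρ
      rw [hκρ] at h2
      linarith
    have haa : a = a' := by
      funext r
      by_contra hr
      have h1 := hzc r
      have h2 := hz'c r
      have e : loF g P (c : ℕ) a r - loF g P (c : ℕ) a' r = ((a r : ℝ) - (a' r : ℝ)) * P := by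
        unfold loF; ring
      have h1abs : (1:ℝ) ≤ |(a r : ℝ) - (a' r : ℝ)| := by
        exact_mod_cast Int.one_le_abs (sub_ne_zero.mpr hr)
      have hloPb : P ≤ |loF g P (c : ℕ) a r - loF g P (c : ℕ) a' r| := by
        rw [e, abs_mul, abs_of_pos hPpos]
        nlinarith
      have hcd := abs_lt.1 (coord r)
      rcases abs_cases (loF g P (c : ℕ) a r - loF g P (c : ℕ) a' r) with ⟨heq2, _⟩ | ⟨heq2, _⟩
      · rw [heq2] at hloPb
        have := h1.1
        have := h2.2
        linarith [hcd.2]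
      · rw [heq2] at hloPb
        have := h1.2
        have := h2.1
        linarith [hcd.1]
    subst haa
    have hUU : U = U' := by
      by_contra hUU
      obtain ⟨u, huU, hu⟩ := (infDist_lt_iff hUne).1 hzU
      obtain ⟨u', huU', hu'⟩ := (infDist_lt_iff hU'ne).1 hz'U
      have hsep := sepx (iWit g P (c : ℕ) a) U hU U' hU' hUU u huU u' huU'
      have h4 := dist_triangle4 u z.fst z'.fst u'
      have hcomm : dist u z.fst = dist z.fst u := dist_comm _ _
      linarith
    have hVV : V = V' := by
      by_contra hVV
      obtain ⟨v, hvV, hv⟩ := (infDist_lt_iff hVne).1 hzV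
      obtain ⟨v', hvV', hv'⟩ := (infDist_lt_iff hV'ne).1 hz'V
      have hsep := sepy (jWit g P (c : ℕ) a) V hV V' hV' hVV v hvV v' hvV'
      have h4 := dist_triangle4 v z.snd z'.snd v'
      have hcomm : dist v z.snd = dist z.snd v := dist_comm _ _
      linarith
    rw [hUU, hVV]

end LasProdAux

/-- For metric spaces `X` and `Y`, the product `X × Y` with the sum metric
(here realized as the `L¹`-product `WithLp 1 (X × Y)`, whose distance is the
sum of the coordinate distances) satisfies
`ℓ-asdim (X × Y) ≤ ℓ-asdim X + ℓ-asdim Y`. -/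
theorem lasdim_prod_le {X Y : Type*} [MetricSpace X] [MetricSpace Y] :
    lasdim (WithLp 1 (X × Y)) ≤ lasdim X + lasdim Y := by
  classical
  rcases eq_or_ne (lasdim X) ⊤ with hX | hX
  · rw [hX, top_add]; exact le_top
  rcases eq_or_ne (lasdim Y) ⊤ with hY | hY
  · rw [hY, add_top]; exact le_top
  have hXe : ∃ n : ℕ, LAsdimLE X n := by
    by_contra h
    push_neg at h
    apply hX
    have he : {m : ℕ∞ | ∃ n : ℕ, m = (n : ℕ∞) ∧ LAsdimLE X n} = ∅ := by
      ext m
      simp only [Set.mem_setOf_eq, Set.mem_empty_iff_false, iff_false]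
      rintro ⟨n, _, hn⟩
      exact h n hn
    unfold lasdim
    rw [he, sInf_empty]
  have hYe : ∃ n : ℕ, LAsdimLE Y n := by
    by_contra h
    push_neg at h
    apply hY
    have he : {m : ℕ∞ | ∃ n : ℕ, m = (n : ℕ∞) ∧ LAsdimLE Y n} = ∅ := by
      ext m
      simp only [Set.mem_setOf_eq, Set.mem_empty_iff_false, iff_false]
      rintro ⟨n, _, hn⟩
      exact h n hn
    unfold lasdim
    rw [he, sInf_empty]
  have hfX := Nat.find_spec hXe
  have hfY := Nat.find_spec hYe
  have hminX : ((Nat.find hXe : ℕ) : ℕ∞) ≤ lasdim X := by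
    apply le_sInf
    rintro m ⟨n', rfl, hn'⟩
    exact_mod_cast Nat.find_min' hXe hn'
  have hminY : ((Nat.find hYe : ℕ) : ℕ∞) ≤ lasdim Y := by
    apply le_sInf
    rintro m ⟨n', rfl, hn'⟩
    exact_mod_cast Nat.find_min' hYe hn'
  have hz : lasdim (WithLp 1 (X × Y)) ≤ ((Nat.find hXe + Nat.find hYe : ℕ) : ℕ∞) :=
    sInf_le ⟨Nat.find hXe + Nat.find hYe, rfl, LasProdAux.key hfX hfY⟩
  calc lasdim (WithLp 1 (X × Y)) ≤ ((Nat.find hXe + Nat.find hYe : ℕ) : ℕ∞) := hz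
    _ = ((Nat.find hXe : ℕ) : ℕ∞) + ((Nat.find hYe : ℕ) : ℕ∞) := by push_cast; rfl
    _ ≤ lasdim X + lasdim Y := add_le_add hminX hminY
end

section
/- If T₁, …, T_n are metric trees, then the product T₁ × … × T_n equipped with the sum metric satisfies ℓ-asdim(T₁ × … × T_n) ≤ n, and consequently asdim(T₁ × … × T_n) ≤ n. -/
section AuxProofs

open Set

section Helpers

variable {X : Type*} [MetricSpace X] {s : Set X} {u v w : X}

lemma geo_left_mem (h : IsGeodesicSeg X s u v) : u ∈ s := by
  obtain ⟨γ, h0, hd, hiso, him⟩ := h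
  rw [him]; exact ⟨0, ⟨le_refl _, dist_nonneg⟩, h0⟩

lemma geo_right_mem (h : IsGeodesicSeg X s u v) : v ∈ s := by
  obtain ⟨γ, h0, hd, hiso, him⟩ := h
  rw [him]; exact ⟨dist u v, ⟨dist_nonneg, le_refl _⟩, hd⟩

lemma geo_dist_add (h : IsGeodesicSeg X s u v) (hw : w ∈ s) :
    dist u w + dist w v = dist u v := by
  obtain ⟨γ, h0, hd, hiso, him⟩ := h
  rw [him] at hw; obtain ⟨a, haI, haw⟩ := hw
  have h1 : dist u w = a := by
    have := hiso 0 ⟨le_refl _, dist_nonneg⟩ a haI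
    rw [h0, haw] at this
    rw [this, zero_sub, abs_neg, abs_of_nonneg haI.1]
  have h2 : dist w v = dist u v - a := by
    have := hiso a haI (dist u v) ⟨dist_nonneg, le_refl _⟩
    rw [haw, hd] at this
    rw [this, abs_of_nonpos (by linarith [haI.2] : a - dist u v ≤ 0)]; ring
  rw [h1, h2]; ring

lemma geo_dist_abs (h : IsGeodesicSeg X s u v) {w' : X} (hw : w ∈ s) (hw' : w' ∈ s) :
    dist w w' = |dist u w - dist u w'| := by
  obtain ⟨γ, h0, hd, hiso, him⟩ := h
  rw [him] at hw hw'; obtain ⟨a, haI, haw⟩ := hw; obtain ⟨a', haI', haw'⟩ := hw'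
  have h1 : dist u w = a := by
    have := hiso 0 ⟨le_refl _, dist_nonneg⟩ a haI
    rw [h0, haw] at this
    rw [this, zero_sub, abs_neg, abs_of_nonneg haI.1]
  have h1' : dist u w' = a' := by
    have := hiso 0 ⟨le_refl _, dist_nonneg⟩ a' haI'
    rw [h0, haw'] at this
    rw [this, zero_sub, abs_neg, abs_of_nonneg haI'.1]
  have h2 : dist w w' = |a - a'| := by
    rw [← haw, ← haw']; exact hiso a haI a' haI'
  rw [h2, h1, h1']

lemma geo_subseg (h : IsGeodesicSeg X s u v) (hw : w ∈ s) :
    ∃ s₁ s₂ : Set X, IsGeodesicSeg X s₁ u w ∧ IsGeodesicSeg X s₂ w v ∧ s₁ ⊆ s ∧ s₂ ⊆ s := by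
  obtain ⟨γ, h0, hd, hiso, him⟩ := h
  rw [him] at hw; obtain ⟨a, haI, haw⟩ := hw
  have h1 : dist u w = a := by
    have := hiso 0 ⟨le_refl _, dist_nonneg⟩ a haI
    rw [h0, haw] at this
    rw [this, zero_sub, abs_neg, abs_of_nonneg haI.1]
  have h2 : dist w v = dist u v - a := by
    have := hiso a haI (dist u v) ⟨dist_nonneg, le_refl _⟩
    rw [haw, hd] at this
    rw [this, abs_of_nonpos (by linarith [haI.2] : a - dist u v ≤ 0)]; ring
  refine ⟨γ '' Icc 0 a, (fun r => γ (a + r)) '' Icc 0 (dist u v - a), ?_, ?_, ?_, ?_⟩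
  · refine ⟨γ, h0, ?_, ?_, ?_⟩
    · rw [h1]; exact haw
    · rw [h1]
      exact fun b hb c hc => hiso b ⟨hb.1, hb.2.trans haI.2⟩ c ⟨hc.1, hc.2.trans haI.2⟩
    · rw [h1]
  · refine ⟨fun r => γ (a + r), ?_, ?_, ?_, ?_⟩
    · show γ (a + 0) = w
      rw [add_zero]; exact haw
    · show γ (a + dist w v) = v
      rw [h2, add_sub_cancel, hd]
    · rw [h2]
      intro b hb c hc
      show dist (γ (a + b)) (γ (a + c)) = |b - c|
      have := hiso (a + b) ⟨by linarith [haI.1, hb.1], by linarith [hb.2]⟩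
        (a + c) ⟨by linarith [haI.1, hc.1], by linarith [hc.2]⟩
      rw [this, add_sub_add_left_eq_sub]
    · rw [h2]
  · rw [him]; exact image_mono (f := γ) (Icc_subset_Icc le_rfl haI.2)
  · rintro _ ⟨r, hr, rfl⟩
    rw [him]; exact ⟨a + r, ⟨by linarith [hr.1, haI.1], by linarith [hr.2]⟩, rfl⟩

lemma geo_closed_s13 (h : IsGeodesicSeg X s u v) : IsClosed s := by
  obtain ⟨γ, h0, hd, hiso, him⟩ := h
  have hlip : LipschitzOnWith 1 γ (Icc 0 (dist u v)) :=
    LipschitzOnWith.of_dist_le_mul fun a ha b hb => by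
      rw [hiso a ha b hb, NNReal.coe_one, one_mul, Real.dist_eq]
  rw [him]; exact (isCompact_Icc.image_of_continuousOn hlip.continuousOn).isClosed

lemma geo_preconn_s13 (h : IsGeodesicSeg X s u v) : IsPreconnected s := by
  obtain ⟨γ, h0, hd, hiso, him⟩ := h
  have hlip : LipschitzOnWith 1 γ (Icc 0 (dist u v)) :=
    LipschitzOnWith.of_dist_le_mul fun a ha b hb => by
      rw [hiso a ha b hb, NNReal.coe_one, one_mul, Real.dist_eq]
  rw [him]; exact isPreconnected_Icc.image γ hlip.continuousOn

end Helpers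

lemma oneleg {X : Type*} [TopologicalSpace X] {A B C g : Set X} {t : X}
    (hA : IsClosed A) (hB : IsClosed B) (hC : IsClosed C)
    (hAB : A ∩ B = {t}) (hBC : B ∩ C = {t}) (hAC : A ∩ C = {t})
    (hg : IsPreconnected g) (hsub : g ⊆ A ∪ B ∪ C) (ht : t ∉ g) :
    g ⊆ A ∨ g ⊆ B ∨ g ⊆ C := by
  by_cases hgA : (g ∩ A).Nonempty
  · left
    by_cases hgBC : (g ∩ (B ∪ C)).Nonempty
    · exfalso
      have hsub' : g ⊆ A ∪ (B ∪ C) := by rwa [← Set.union_assoc]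
      obtain ⟨w, hwg, hwA, hwBC⟩ :=
        isPreconnected_closed_iff.mp hg A (B ∪ C) hA (hB.union hC) hsub' hgA hgBC
      rcases hwBC with hwB | hwC
      · have hw : w ∈ ({t} : Set X) := hAB ▸ ⟨hwA, hwB⟩
        exact ht (Set.mem_singleton_iff.mp hw ▸ hwg)
      · have hw : w ∈ ({t} : Set X) := hAC ▸ ⟨hwA, hwC⟩
        exact ht (Set.mem_singleton_iff.mp hw ▸ hwg)
    · intro u hu
      rcases hsub hu with h | h
      · rcases h with h | h
        · exact h
        · exact absurd ⟨u, hu, Or.inl h⟩ hgBC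
      · exact absurd ⟨u, hu, Or.inr h⟩ hgBC
  · have hsub' : g ⊆ B ∪ C := fun u hu => by
      rcases hsub hu with h | h
      · rcases h with h | h
        · exact absurd ⟨u, hu, h⟩ hgA
        · exact Or.inl h
      · exact Or.inr h
    by_cases hgB : (g ∩ B).Nonempty
    · by_cases hgC : (g ∩ C).Nonempty
      · exfalso
        obtain ⟨w, hwg, hwB, hwC⟩ :=
          isPreconnected_closed_iff.mp hg B C hB hC hsub' hgB hgC
        have hw : w ∈ ({t} : Set X) := hBC ▸ ⟨hwB, hwC⟩
        exact ht (Set.mem_singleton_iff.mp hw ▸ hwg)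
      · right; left
        intro u hu
        rcases hsub' hu with h | h
        · exact h
        · exact absurd ⟨u, hu, h⟩ hgC
    · right; right
      intro u hu
      rcases hsub' hu with h | h
      · exact absurd ⟨u, hu, h⟩ hgB
      · exact h

lemma key {X : Type*} [MetricSpace X] (hX : IsMetricTree X) (p x y z : X) (sx : Set X)
    (hsx : IsGeodesicSeg X sx p x) (hz : z ∈ sx)
    (hb : 0 < dist p z)
    (hbc : dist x y < dist p x + dist p y - 2 * dist p z) :
    dist z y ≤ dist p y - dist p z := by
  obtain ⟨sxy, hsxy⟩ := hX.1 x y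
  obtain ⟨syp, hsyp⟩ := hX.1 y p
  obtain ⟨a₁, a₂, a₃, t, A, B, C, hA, hB, hC, hAB, hBC, hAC, hU⟩ :=
    hX.2 p x y sx sxy syp hsx hsxy hsyp
  have hzx : dist z x = dist p x - dist p z := by
    have := geo_dist_add hsx hz; linarith
  have hdxlow : dist p z < dist p x := by
    have h1 := dist_triangle p x y
    linarith
  have hdylow : dist p z < dist p y := by
    have h1 := dist_triangle p y x
    rw [dist_comm y x] at h1
    linarith
  obtain ⟨s₁, s₂, hseg₁, hseg₂, hsub₁, hsub₂⟩ := geo_subseg hsx hz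
  have hsubsx : sx ⊆ A ∪ B ∪ C := by
    rw [← hU]; intro u hu; exact Set.mem_union_left _ (Set.mem_union_left _ hu)
  have hsubsxy : sxy ⊆ A ∪ B ∪ C := by
    rw [← hU]; intro u hu; exact Set.mem_union_left _ (Set.mem_union_right _ hu)
  have hsubsyp : syp ⊆ A ∪ B ∪ C := by
    rw [← hU]; intro u hu; exact Set.mem_union_right _ hu
  set Sm : X → X → Prop :=
    fun u v => (u ∈ A ∧ v ∈ A) ∨ (u ∈ B ∧ v ∈ B) ∨ (u ∈ C ∧ v ∈ C) with hSmdef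
  have habs : ∀ u v, Sm u v → dist u v = |dist u t - dist v t| := by
    rintro u v (⟨h1, h2⟩ | ⟨h1, h2⟩ | ⟨h1, h2⟩)
    · have e1 := geo_dist_add hA h1
      have e2 := geo_dist_add hA h2
      have e3 := geo_dist_abs hA h1 h2
      rw [e3, show dist a₁ u - dist a₁ v = dist v t - dist u t by linarith, abs_sub_comm]
    · have e1 := geo_dist_add hB h1
      have e2 := geo_dist_add hB h2
      have e3 := geo_dist_abs hB h1 h2
      rw [e3, show dist a₂ u - dist a₂ v = dist v t - dist u t by linarith, abs_sub_comm]
    · have e1 := geo_dist_add hC h1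
      have e2 := geo_dist_add hC h2
      have e3 := geo_dist_abs hC h1 h2
      rw [e3, show dist a₃ u - dist a₃ v = dist v t - dist u t by linarith, abs_sub_comm]
  have hsymm : ∀ u v, Sm u v → Sm v u := by
    rintro u v (⟨h1, h2⟩ | ⟨h1, h2⟩ | ⟨h1, h2⟩)
    exacts [Or.inl ⟨h2, h1⟩, Or.inr (Or.inl ⟨h2, h1⟩), Or.inr (Or.inr ⟨h2, h1⟩)]
  have hsingle : ∀ {q : X} {S1 S2 : Set X}, S1 ∩ S2 = {t} → q ∈ S1 → q ∈ S2 → q = t := by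
    intro q S1 S2 hS hq1 hq2
    have : q ∈ ({t} : Set X) := hS ▸ ⟨hq1, hq2⟩
    simpa using this
  have htrans : ∀ u v w, Sm u v → Sm v w → v ≠ t → Sm u w := by
    rintro u v w (⟨h1, h2⟩ | ⟨h1, h2⟩ | ⟨h1, h2⟩) (⟨h3, h4⟩ | ⟨h3, h4⟩ | ⟨h3, h4⟩) hvt
    · exact Or.inl ⟨h1, h4⟩
    · exact absurd (hsingle hAB h2 h3) hvt
    · exact absurd (hsingle hAC h2 h3) hvt
    · exact absurd (hsingle hAB h3 h2) hvt
    · exact Or.inr (Or.inl ⟨h1, h4⟩)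
    · exact absurd (hsingle hBC h2 h3) hvt
    · exact absurd (hsingle hAC h3 h2) hvt
    · exact absurd (hsingle hBC h3 h2) hvt
    · exact Or.inr (Or.inr ⟨h1, h4⟩)
  have hSmAll : ∀ g : Set X, IsPreconnected g → g ⊆ A ∪ B ∪ C → t ∉ g →
      ∀ u ∈ g, ∀ v ∈ g, Sm u v := by
    intro g hg hsub htg u hu v hv
    rcases oneleg (geo_closed_s13 hA) (geo_closed_s13 hB) (geo_closed_s13 hC) hAB hBC hAC hg hsub htg
      with h | h | h
    · exact Or.inl ⟨h hu, h hv⟩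
    · exact Or.inr (Or.inl ⟨h hu, h hv⟩)
    · exact Or.inr (Or.inr ⟨h hu, h hv⟩)
  by_cases h₁ : t ∈ sx
  · have hPX : dist p t + dist t x = dist p x := geo_dist_add hsx h₁
    have hZt : dist z t = |dist p z - dist p t| := geo_dist_abs hsx hz h₁
    by_cases h₂ : t ∈ syp
    · have hYP : dist y t + dist t p = dist y p := geo_dist_add hsyp h₂
      have hty : dist t y = dist p y - dist p t := by
        rw [dist_comm y t, dist_comm t p, dist_comm y p] at hYP
        linarith
      by_cases h₃ : dist p z ≤ dist p t
      · have hzt' : dist z t = dist p t - dist p z := by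
          rw [hZt, abs_of_nonpos (by linarith)]; ring
        have h4 := dist_triangle z t y
        linarith
      · push_neg at h₃
        by_cases h₄ : t ∈ sxy
        · have hXY := geo_dist_add hsxy h₄
          have hxt : dist x t = dist p x - dist p t := by
            rw [dist_comm x t]; linarith
          linarith
        · have hSxy : Sm x y :=
            hSmAll sxy (geo_preconn_s13 hsxy) hsubsxy h₄ x (geo_left_mem hsxy) y (geo_right_mem hsxy)
          have ht₂ : t ∉ s₂ := by
            intro hts₂
            have h5 := geo_dist_add hseg₂ hts₂
            have h6 : dist t x = dist p x - dist p t := by linarith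
            have h7 := dist_nonneg (x := z) (y := t)
            linarith
          have hSzx : Sm z x :=
            hSmAll s₂ (geo_preconn_s13 hseg₂) (hsub₂.trans hsubsx) ht₂ z (geo_left_mem hseg₂)
              x (geo_right_mem hseg₂)
          have hxt' : x ≠ t := by
            intro he
            have h0 : dist t x = 0 := by rw [he, dist_self]
            linarith
          have hSzy : Sm z y := htrans z x y hSzx hSxy hxt'
          have hzt' : dist z t = dist p z - dist p t := by
            rw [hZt, abs_of_nonneg (by linarith)]
          have hyt : dist y t = dist p y - dist p t := by rw [dist_comm y t]; exact hty
          rw [habs z y hSzy, hzt', hyt,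
            show dist p z - dist p t - (dist p y - dist p t) = -(dist p y - dist p z) by ring,
            abs_neg, abs_of_nonneg (by linarith)]
    · have hSyp_all := hSmAll syp (geo_preconn_s13 hsyp) hsubsyp h₂
      have hSpy : Sm p y :=
        hsymm _ _ (hSyp_all y (geo_left_mem hsyp) p (geo_right_mem hsyp))
      have hpt : p ≠ t := fun he => h₂ (he ▸ geo_right_mem hsyp)
      have hyt : y ≠ t := fun he => h₂ (he ▸ geo_left_mem hsyp)
      have hPtpos : 0 < dist p t := dist_pos.mpr hpt
      have hdy_abs := habs p y hSpy
      rcases (abs_eq dist_nonneg).mp hdy_abs.symm with hY | hY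
      · -- Yt = Pt - dy
        have hτb : dist p z < dist p t := by
          have := dist_nonneg (x := y) (y := t)
          linarith
        have ht₁ : t ∉ s₁ := by
          intro hts₁
          have h5 := geo_dist_add hseg₁ hts₁
          have h7 := dist_nonneg (x := t) (y := z)
          linarith
        have hSpz : Sm p z :=
          hSmAll s₁ (geo_preconn_s13 hseg₁) (hsub₁.trans hsubsx) ht₁ p (geo_left_mem hseg₁)
            z (geo_right_mem hseg₁)
        have hSzy : Sm z y := htrans z p y (hsymm _ _ hSpz) hSpy hpt
        have hzt' : dist z t = dist p t - dist p z := by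
          rw [hZt, abs_of_nonpos (by linarith)]; ring
        rw [habs z y hSzy, hzt',
          show dist p t - dist p z - dist y t = dist p y - dist p z by linarith,
          abs_of_nonneg (by linarith)]
      · -- Yt = Pt + dy
        by_cases h₄ : t ∈ sxy
        · have hXY := geo_dist_add hsxy h₄
          have h5 : dist x t = dist p x - dist p t := by rw [dist_comm x t]; linarith
          have h6 : dist t y = dist p t + dist p y := by rw [dist_comm t y]; linarith
          linarith
        · have hSxy : Sm x y :=
            hSmAll sxy (geo_preconn_s13 hsxy) hsubsxy h₄ x (geo_left_mem hsxy) y (geo_right_mem hsxy)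
          have hSxp : Sm x p := htrans x y p hSxy (hsymm _ _ hSpy) hyt
          have habs_xp := habs x p hSxp
          have hxthm : dist x t = dist p x - dist p t := by rw [dist_comm x t]; linarith
          rw [dist_comm x p, hxthm] at habs_xp
          rcases (abs_eq dist_nonneg).mp habs_xp.symm with h7 | h7
          · linarith
          · have hxt0 : dist x t = 0 := by linarith
            have hxt1 : x = t := by rwa [dist_eq_zero] at hxt0
            exact absurd (hxt1 ▸ geo_left_mem hsxy) h₄
  · have hSx_all := hSmAll sx (geo_preconn_s13 hsx) hsubsx h₁
    have hSpz : Sm p z := hSx_all p (geo_left_mem hsx) z hz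
    have hSzx : Sm z x := hSx_all z hz x (geo_right_mem hsx)
    have hSpx : Sm p x := hSx_all p (geo_left_mem hsx) x (geo_right_mem hsx)
    have hpt : p ≠ t := fun he => h₁ (he ▸ geo_left_mem hsx)
    have hb_abs := habs p z hSpz
    have hzx_abs := habs z x hSzx
    have hpx_abs := habs p x hSpx
    rw [hzx] at hzx_abs
    have hn1 := dist_nonneg (x := p) (y := t)
    have hn2 := dist_nonneg (x := z) (y := t)
    have hn3 := dist_nonneg (x := x) (y := t)
    have hn4 := dist_nonneg (x := y) (y := t)
    have hn5 := dist_nonneg (x := x) (y := y)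
    by_cases h₂ : t ∈ syp
    · have hYP := geo_dist_add hsyp h₂
      have hPt : dist p t = dist p y - dist y t := by
        rw [dist_comm t p, dist_comm y p] at hYP
        linarith
      rcases (abs_eq dist_nonneg).mp hb_abs.symm with hZ | hZ
      · -- Zt = Pt - b
        have h8 : dist t y = dist y t := dist_comm t y
        have h9 := dist_triangle z t y
        linarith
      · -- Zt = Pt + b
        rcases (abs_eq (by linarith : (0:ℝ) ≤ dist p x - dist p z)).mp hzx_abs.symm with h5 | h5 <;>
          rcases (abs_eq dist_nonneg).mp hpx_abs.symm with h6 | h6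
        · linarith
        · linarith
        · linarith
        · -- Xt = Pt + dx
          by_cases h₄ : t ∈ sxy
          · have hXY := geo_dist_add hsxy h₄
            have h9 : dist t y = dist y t := dist_comm t y
            linarith
          · have hSxy : Sm x y :=
              hSmAll sxy (geo_preconn_s13 hsxy) hsubsxy h₄ x (geo_left_mem hsxy) y (geo_right_mem hsxy)
            have hxt : x ≠ t := fun he => h₄ (he ▸ geo_left_mem hsxy)
            have hytne : y ≠ t := fun he => h₄ (he ▸ geo_right_mem hsxy)
            have hSyp' : Sm y p := htrans y x p (hsymm _ _ hSxy) (hsymm _ _ hSpx) hxt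
            have h10 := habs y p hSyp'
            have h12 : dist y p = dist p y := dist_comm y p
            rcases (abs_eq dist_nonneg).mp h10.symm with h11 | h11
            · have hp0 : dist p t = 0 := by linarith
              exact absurd (dist_eq_zero.mp hp0) hpt
            · have hy0 : dist y t = 0 := by linarith
              exact absurd (dist_eq_zero.mp hy0) hytne
    · have hSyp_all := hSmAll syp (geo_preconn_s13 hsyp) hsubsyp h₂
      have hSyp' : Sm y p := hSyp_all y (geo_left_mem hsyp) p (geo_right_mem hsyp)
      have hSpy := hsymm _ _ hSyp'
      have hSzy : Sm z y := htrans z p y (hsymm _ _ hSpz) hSpy hpt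
      have hzy_abs := habs z y hSzy
      have hpy_abs := habs p y hSpy
      have h9 : dist t y = dist y t := dist_comm t y
      have hxy3 : dist x y = dist x t + dist t y ∨
          dist x t - dist y t = dist x y ∨ dist x t - dist y t = -(dist x y) := by
        by_cases h₄ : t ∈ sxy
        · exact Or.inl (geo_dist_add hsxy h₄).symm
        · have hSxy : Sm x y :=
            hSmAll sxy (geo_preconn_s13 hsxy) hsubsxy h₄ x (geo_left_mem hsxy) y (geo_right_mem hsxy)
          have := habs x y hSxy
          rcases (abs_eq dist_nonneg).mp this.symm with h | h
          · exact Or.inr (Or.inl h)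
          · exact Or.inr (Or.inr h)
      rw [hzy_abs]
      rcases (abs_eq dist_nonneg).mp hb_abs.symm with hZ | hZ <;>
        rcases (abs_eq (by linarith : (0:ℝ) ≤ dist p x - dist p z)).mp hzx_abs.symm with h5 | h5 <;>
        rcases (abs_eq dist_nonneg).mp hpx_abs.symm with h6 | h6 <;>
        rcases (abs_eq dist_nonneg).mp hpy_abs.symm with h7 | h7 <;>
        rcases hxy3 with h8 | h8 | h8 <;>
        · rw [abs_le]
          constructor <;> linarith

lemma proj_eq {X : Type*} [MetricSpace X] (hX : IsMetricTree X) (p x y m m' : X)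
    (sx sy : Set X) (hsx : IsGeodesicSeg X sx p x) (hsy : IsGeodesicSeg X sy p y)
    (hm : m ∈ sx) (hm' : m' ∈ sy) (heq : dist p m' = dist p m)
    (hc : 2 * dist p m < dist p x + dist p y - dist x y) : m = m' := by
  rcases eq_or_lt_of_le (dist_nonneg : 0 ≤ dist p m) with h0 | hbpos
  · have h1 : p = m := dist_eq_zero.mp h0.symm
    have h2 : p = m' := dist_eq_zero.mp (by rw [heq, ← h0])
    rw [← h1, ← h2]
  · have hbdy : dist p m < dist p y := by
      have h1 := dist_triangle p y x
      rw [dist_comm y x] at h1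
      linarith
    have hmy : dist m y = dist p y - dist p m := by
      have h1 : dist m y ≤ dist p y - dist p m :=
        key hX p x y m sx hsx hm hbpos (by linarith)
      have h2 := dist_triangle p m y
      linarith
    have hkey2 : ∀ ε : ℝ, 0 < ε → ε < dist p m → dist m m' ≤ 2 * ε := by
      intro ε hε hεb
      obtain ⟨γ, hγ0, hγd, hiso, him⟩ := id hsy
      have hm'2 := hm'
      rw [him] at hm'2
      obtain ⟨a, haI, ha⟩ := hm'2
      have ham : a = dist p m := by
        have h3 := hiso 0 ⟨le_refl _, dist_nonneg⟩ a haI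
        rw [hγ0, ha, heq] at h3
        rw [zero_sub, abs_neg, abs_of_nonneg haI.1] at h3
        exact h3.symm
      have hrI : dist p m - ε ∈ Set.Icc 0 (dist p y) := ⟨by linarith, by linarith⟩
      have hz'' : γ (dist p m - ε) ∈ sy := by
        rw [him]; exact ⟨dist p m - ε, hrI, rfl⟩
      have hpr : dist p (γ (dist p m - ε)) = dist p m - ε := by
        have h3 := hiso 0 ⟨le_refl _, dist_nonneg⟩ _ hrI
        rw [hγ0] at h3
        rw [h3, zero_sub, abs_neg, abs_of_nonneg hrI.1]
      have h3 : dist (γ (dist p m - ε)) m ≤ ε := by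
        have h4 := key hX p y m (γ (dist p m - ε)) sy hsy hz''
          (by rw [hpr]; linarith)
          (by rw [hpr, dist_comm y m, hmy]; linarith)
        rw [hpr] at h4
        linarith
      have h4 : dist m' (γ (dist p m - ε)) = ε := by
        rw [← ha]
        rw [hiso a haI _ hrI, ham, abs_of_nonneg (by linarith)]
        ring
      have h5 := dist_triangle m (γ (dist p m - ε)) m'
      have h6 : dist m (γ (dist p m - ε)) = dist (γ (dist p m - ε)) m := dist_comm _ _
      have h7 : dist (γ (dist p m - ε)) m' = dist m' (γ (dist p m - ε)) := dist_comm _ _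
      linarith
    by_contra hne
    have hd : 0 < dist m m' := dist_pos.mpr hne
    have hε : 0 < min (dist p m / 2) (dist m m' / 3) :=
      lt_min (by linarith) (by linarith)
    have h1 : dist m m' ≤ 2 * min (dist p m / 2) (dist m m' / 3) :=
      hkey2 _ hε (lt_of_le_of_lt (min_le_left _ _) (by linarith))
    have h2 := min_le_right (dist p m / 2) (dist m m' / 3)
    linarith

lemma exists_proj {X : Type*} [MetricSpace X] (hX : IsMetricTree X) (p : X) :
    ∃ π : ℝ → X → X,
      (∀ r v, dist p (π r v) = max 0 (min r (dist p v))) ∧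
      (∀ r v, dist (π r v) v = dist p v - max 0 (min r (dist p v))) ∧
      (∀ r v w, 2 * r < dist p v + dist p w - dist v w → π r v = π r w) := by
  have hgeo : ∀ v : X, ∃ s, IsGeodesicSeg X s p v := fun v => hX.1 p v
  choose s hs using hgeo
  have hγ : ∀ v : X, ∃ γ : ℝ → X, γ 0 = p ∧ γ (dist p v) = v ∧
      (∀ a ∈ Set.Icc (0:ℝ) (dist p v), ∀ b ∈ Set.Icc (0:ℝ) (dist p v),
        dist (γ a) (γ b) = |a - b|) ∧ s v = γ '' Set.Icc (0:ℝ) (dist p v) :=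
    fun v => hs v
  choose γ hγ0 hγd hiso him using hγ
  have hclampI : ∀ (r : ℝ) (v : X), max 0 (min r (dist p v)) ∈ Set.Icc (0:ℝ) (dist p v) :=
    fun r v => ⟨le_max_left _ _, max_le dist_nonneg (min_le_right _ _)⟩
  have hA1 : ∀ (r : ℝ) (v : X), dist p (γ v (max 0 (min r (dist p v)))) = max 0 (min r (dist p v)) := by
    intro r v
    have h3 := hiso v 0 ⟨le_refl _, dist_nonneg⟩ _ (hclampI r v)
    rw [hγ0 v] at h3
    rw [h3, zero_sub, abs_neg, abs_of_nonneg (hclampI r v).1]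
  refine ⟨fun r v => γ v (max 0 (min r (dist p v))), hA1, ?_, ?_⟩
  · intro r v
    have h3 := hiso v _ (hclampI r v) (dist p v) ⟨dist_nonneg, le_refl _⟩
    rw [hγd v] at h3
    show dist (γ v (max 0 (min r (dist p v)))) v = _
    rw [h3, abs_of_nonpos (by linarith [(hclampI r v).2])]
    ring
  · intro r v w hlt
    have hv : r < dist p v := by
      have := dist_triangle p v w
      linarith
    have hw : r < dist p w := by
      have h1 := dist_triangle p w v
      rw [dist_comm w v] at h1
      linarith
    show γ v (max 0 (min r (dist p v))) = γ w (max 0 (min r (dist p w)))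
    rcases le_or_gt r 0 with hr0 | hr0
    · rw [min_eq_left (hr0.trans dist_nonneg), min_eq_left (hr0.trans dist_nonneg),
        max_eq_left hr0, hγ0 v, hγ0 w]
    · have h1 : max 0 (min r (dist p v)) = r := by
        rw [min_eq_left hv.le, max_eq_right hr0.le]
      have h2 : max 0 (min r (dist p w)) = r := by
        rw [min_eq_left hw.le, max_eq_right hr0.le]
      rw [h1, h2]
      refine proj_eq hX p v w _ _ (s v) (s w) (hs v) (hs w) ?_ ?_ ?_ ?_
      · rw [him v]; exact ⟨r, ⟨hr0.le, hv.le⟩, rfl⟩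
      · rw [him w]; exact ⟨r, ⟨hr0.le, hw.le⟩, rfl⟩
      · have e1 : dist p (γ v r) = r := by
          have h3 := hiso v 0 ⟨le_refl _, dist_nonneg⟩ r ⟨hr0.le, hv.le⟩
          rw [hγ0 v] at h3
          rw [h3, zero_sub, abs_neg, abs_of_nonneg hr0.le]
        have e2 : dist p (γ w r) = r := by
          have h3 := hiso w 0 ⟨le_refl _, dist_nonneg⟩ r ⟨hr0.le, hw.le⟩
          rw [hγ0 w] at h3
          rw [h3, zero_sub, abs_neg, abs_of_nonneg hr0.le]
        rw [e1, e2]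
      · have e1 : dist p (γ v r) = r := by
          have h3 := hiso v 0 ⟨le_refl _, dist_nonneg⟩ r ⟨hr0.le, hv.le⟩
          rw [hγ0 v] at h3
          rw [h3, zero_sub, abs_neg, abs_of_nonneg hr0.le]
        rw [e1]; exact hlt

lemma badAux {n : ℕ} {R L u : ℝ} (hR : 0 < R) (hL : L = 2 * (n + 1) * R)
    {j j' : ℕ} (hj' : j' ≤ n) (hlt : j < j')
    (hb : ∀ k : ℤ, ¬(L * k + 2 * j * R + R ≤ u ∧ u ≤ L * k + 2 * j * R + L - R))
    (hb' : ∀ k : ℤ, ¬(L * k + 2 * j' * R + R ≤ u ∧ u ≤ L * k + 2 * j' * R + L - R)) :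
    False := by
  have hLpos : 0 < L := by rw [hL]; positivity
  set K : ℤ := ⌊(u - 2 * j * R) / L⌋ with hK
  set K' : ℤ := ⌊(u - 2 * j' * R) / L⌋ with hK'
  set r : ℝ := u - 2 * j * R - L * K with hrdef
  set r' : ℝ := u - 2 * j' * R - L * K' with hrdef'
  have hr_eq : r = L * Int.fract ((u - 2 * j * R) / L) := by
    rw [hrdef, Int.fract, hK, mul_sub, mul_div_cancel₀ _ (ne_of_gt hLpos)]
  have hr_eq' : r' = L * Int.fract ((u - 2 * j' * R) / L) := by
    rw [hrdef', Int.fract, hK', mul_sub, mul_div_cancel₀ _ (ne_of_gt hLpos)]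
  have hr0 : 0 ≤ r := by
    rw [hr_eq]; exact mul_nonneg hLpos.le (Int.fract_nonneg _)
  have hrL : r < L := by
    rw [hr_eq]
    calc L * Int.fract ((u - 2 * j * R) / L) < L * 1 :=
      (mul_lt_mul_iff_right₀ hLpos).mpr (Int.fract_lt_one _)
    _ = L := mul_one L
  have hr0' : 0 ≤ r' := by
    rw [hr_eq']; exact mul_nonneg hLpos.le (Int.fract_nonneg _)
  have hrL' : r' < L := by
    rw [hr_eq']
    calc L * Int.fract ((u - 2 * j' * R) / L) < L * 1 :=
      (mul_lt_mul_iff_right₀ hLpos).mpr (Int.fract_lt_one _)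
    _ = L := mul_one L
  have h1' : r < R ∨ L - R < r := by
    by_contra hcon
    push_neg at hcon
    exact hb K ⟨by linarith [hcon.1], by linarith [hcon.2]⟩
  have h2' : r' < R ∨ L - R < r' := by
    by_contra hcon
    push_neg at hcon
    exact hb' K' ⟨by linarith [hcon.1], by linarith [hcon.2]⟩
  have hjR : (j : ℝ) + 1 ≤ (j' : ℝ) := by exact_mod_cast hlt
  have hj'R : (j' : ℝ) ≤ n := by exact_mod_cast hj'
  have hΔ1 : 2 * R ≤ 2 * ((j' : ℝ) - j) * R := by nlinarith
  have hΔ2 : 2 * ((j' : ℝ) - j) * R ≤ L - 2 * R := by rw [hL]; nlinarith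
  have hdiff : r - r' = 2 * ((j' : ℝ) - j) * R + L * ((K' : ℝ) - K) := by
    rw [hrdef, hrdef']; push_cast; ring
  have hub : ((K' - K : ℤ) : ℝ) < 1 := by
    have e1 : L * ((K' : ℝ) - K) = r - r' - 2 * ((j' : ℝ) - j) * R := by linarith
    have e2 : L * ((K' : ℝ) - K) < L * 1 := by rw [mul_one]; linarith
    have := (mul_lt_mul_iff_right₀ hLpos).mp e2
    push_cast
    linarith
  have hlb : (-2 : ℝ) < ((K' - K : ℤ) : ℝ) := by
    have e1 : L * ((K' : ℝ) - K) = r - r' - 2 * ((j' : ℝ) - j) * R := by linarith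
    have e2 : L * (-2 : ℝ) < L * ((K' : ℝ) - K) := by nlinarith
    have := (mul_lt_mul_iff_right₀ hLpos).mp e2
    push_cast
    linarith
  have hub' : K' - K < 1 := by exact_mod_cast hub
  have hlb' : -2 < K' - K := by exact_mod_cast hlb
  have hm : K' - K = 0 ∨ K' - K = -1 := by omega
  have hmr : (K' : ℝ) - K = 0 ∨ (K' : ℝ) - K = -1 := by
    rcases hm with hm | hm
    · left
      have h := congrArg (fun z : ℤ => (z : ℝ)) hm
      push_cast at h; linarith
    · right
      have h := congrArg (fun z : ℤ => (z : ℝ)) hm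
      push_cast at h; linarith
  rcases hmr with hm' | hm' <;> rw [hm'] at hdiff <;>
    rcases h1' with h1' | h1' <;> rcases h2' with h2' | h2' <;> linarith

lemma piece_diam {X : Type*} [MetricSpace X] {p : X} {π : ℝ → X → X}
    (hA2 : ∀ r v, dist (π r v) v = dist p v - max 0 (min r (dist p v)))
    {R L β : ℝ} (hR : 0 < R) {v w : X}
    (hv1 : β + R ≤ dist p v) (hv2 : dist p v ≤ β + L - R)
    (hw1 : β + R ≤ dist p w) (hw2 : dist p w ≤ β + L - R)
    (hvw : π β v = π β w) :
    dist v w ≤ 2 * L := by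
  have hclv : β ≤ max 0 (min β (dist p v)) := by
    rw [min_eq_left (by linarith)]; exact le_max_right _ _
  have hclw : β ≤ max 0 (min β (dist p w)) := by
    rw [min_eq_left (by linarith)]; exact le_max_right _ _
  have h1 : dist v (π β v) ≤ L - R := by
    rw [dist_comm, hA2]; linarith
  have h2 : dist (π β v) w ≤ L - R := by
    rw [hvw, hA2]; linarith
  have h3 := dist_triangle v (π β v) w
  linarith

lemma piece_sep {X : Type*} [MetricSpace X] {p : X} {π : ℝ → X → X}
    (hB : ∀ r v w, 2 * r < dist p v + dist p w - dist v w → π r v = π r w)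
    {R β : ℝ} (hR : 0 < R) {v w : X}
    (hv1 : β + R ≤ dist p v) (hw1 : β + R ≤ dist p w)
    (hne : π β v ≠ π β w) : R ≤ dist v w := by
  by_contra hcon
  push_neg at hcon
  exact hne (hB β v w (by linarith))

end AuxProofs

/-- If `T₁, …, T_n` are metric trees, then their product with the sum metric
(realized as the `L¹`-product `PiLp 1 T`, whose distance is the sum of the
coordinate distances) satisfies `ℓ-asdim (T₁ × … × T_n) ≤ n`, and consequently
`asdim (T₁ × … × T_n) ≤ n`. -/
theorem lasdim_asdim_prod_trees_le {n : ℕ} (T : Fin n → Type*)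
    [∀ i, MetricSpace (T i)] (hT : ∀ i, IsMetricTree (T i)) :
    lasdim (PiLp 1 T) ≤ (n : ℕ∞) ∧ asdim (PiLp 1 T) ≤ (n : ℕ∞) := by
  have hmain : LAsdimLE (PiLp 1 T) n := by
    by_cases hne : Nonempty (PiLp 1 T)
    case neg =>
      refine ⟨1, one_pos, 1, one_pos, fun R hR => ⟨fun _ => ∅, ?_, ?_, ?_⟩⟩
      · intro x; exact (hne ⟨x⟩).elim
      · intro i U hU; exact absurd hU (Set.notMem_empty U)
      · intro i U hU; exact absurd hU (Set.notMem_empty U)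
    case pos =>
      obtain ⟨x₀⟩ := hne
      have hproj := fun i => exists_proj (hT i) (x₀ i)
      choose π hπ using hproj
      have hπ3 : ∀ i r v w,
          2 * r < dist (x₀ i) v + dist (x₀ i) w - dist v w → π i r v = π i r w :=
        fun i => (hπ i).2.2
      refine ⟨4 * (n + 1) ^ 2, by positivity, 1, one_pos, fun R hR => ?_⟩
      have hRpos : (0 : ℝ) < R := lt_of_lt_of_le one_pos hR
      set L : ℝ := 2 * (n + 1) * R with hLdef
      have hLpos : 0 < L := by rw [hLdef]; positivity
      have hdistsum : ∀ x y : PiLp 1 T, dist x y = ∑ i, dist (x i) (y i) := by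
        intro x y
        rw [PiLp.dist_eq_sum (by norm_num : 0 < (1 : ENNReal).toReal)]
        simp [ENNReal.toReal_one, Real.rpow_one]
      refine ⟨fun j => {U | ∃ (k : Fin n → ℤ) (c : ∀ i, T i), U =
        {v : PiLp 1 T | ∀ i, L * k i + 2 * (j : ℕ) * R + R ≤ dist (x₀ i) (v i) ∧
          dist (x₀ i) (v i) ≤ L * k i + 2 * (j : ℕ) * R + L - R ∧
          π i (L * k i + 2 * (j : ℕ) * R) (v i) = c i}}, ?_, ?_, ?_⟩
      · -- coverage
        intro x
        have hexgood : ∃ j : Fin (n + 1), ∀ i, ∃ k : ℤ,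
            L * k + 2 * (j : ℕ) * R + R ≤ dist (x₀ i) (x i) ∧
            dist (x₀ i) (x i) ≤ L * k + 2 * (j : ℕ) * R + L - R := by
          by_contra hcon
          push_neg at hcon
          have hcon' : ∀ j : Fin (n + 1), ∃ i : Fin n, ∀ k : ℤ,
              ¬(L * k + 2 * (j : ℕ) * R + R ≤ dist (x₀ i) (x i) ∧
                dist (x₀ i) (x i) ≤ L * k + 2 * (j : ℕ) * R + L - R) := by
            intro j
            obtain ⟨i, hi⟩ := hcon j
            refine ⟨i, fun k hk => ?_⟩
            have := hi k hk.1
            linarith [hk.2]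
          choose G hG using hcon'
          have hninj : ¬Function.Injective G := by
            intro hinj
            have hcard := Fintype.card_le_of_injective G hinj
            simp only [Fintype.card_fin] at hcard
            omega
          rw [Function.Injective] at hninj
          push_neg at hninj
          obtain ⟨j, j', hGj, hjj⟩ := hninj
          have hvalne : (j : ℕ) ≠ (j' : ℕ) := fun h => hjj (Fin.ext h)
          have hbj := hG j
          have hbj' := hG j'
          rw [← hGj] at hbj'
          rcases Nat.lt_or_ge (j : ℕ) (j' : ℕ) with hlt | hge
          · exact badAux hRpos hLdef (Nat.lt_succ_iff.mp j'.isLt) hlt hbj hbj'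
          · have hlt' : (j' : ℕ) < (j : ℕ) := lt_of_le_of_ne hge (Ne.symm hvalne)
            exact badAux hRpos hLdef (Nat.lt_succ_iff.mp j.isLt) hlt' hbj' hbj
        obtain ⟨j, hj⟩ := hexgood
        choose kk hk using hj
        refine ⟨j, _, ⟨kk, fun i => π i (L * kk i + 2 * (j : ℕ) * R) (x i), rfl⟩, ?_⟩
        exact fun i => ⟨(hk i).1, (hk i).2, rfl⟩
      · -- diameter
        rintro j U ⟨k, c, rfl⟩ x hx y hy
        have hcoord : ∀ i, dist (x i) (y i) ≤ 2 * L := by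
          intro i
          obtain ⟨ha1, ha2, ha3⟩ := hx i
          obtain ⟨hb1, hb2, hb3⟩ := hy i
          exact piece_diam (fun r v => (hπ i).2.1 r v) hRpos ha1 ha2 hb1 hb2
            (ha3.trans hb3.symm)
        rw [hdistsum x y]
        calc ∑ i, dist (x i) (y i) ≤ ∑ _i : Fin n, 2 * L :=
              Finset.sum_le_sum fun i _ => hcoord i
          _ = n * (2 * L) := by
              simp [Finset.sum_const, Finset.card_univ, nsmul_eq_mul]
          _ ≤ 4 * (n + 1) ^ 2 * R := by
              rw [hLdef]
              nlinarith [hRpos.le, (Nat.cast_nonneg n : (0 : ℝ) ≤ n)]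
      · -- disjointness
        rintro j U hU V hV hUV x hx y hy
        obtain ⟨k, c, rfl⟩ := hU
        obtain ⟨k', c', rfl⟩ := hV
        have hex : ∃ i, k i ≠ k' i ∨ c i ≠ c' i := by
          by_contra hcon
          push_neg at hcon
          have hkeq : k = k' := funext fun i => (hcon i).1
          have hceq : c = c' := funext fun i => (hcon i).2
          exact hUV (by rw [hkeq, hceq])
        obtain ⟨i₀, hi₀⟩ := hex
        obtain ⟨ha1, ha2, ha3⟩ := hx i₀
        obtain ⟨hb1, hb2, hb3⟩ := hy i₀
        have hRc : R ≤ dist (x i₀) (y i₀) := by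
          rcases eq_or_ne (k i₀) (k' i₀) with hkk | hkk
          · have hcc : c i₀ ≠ c' i₀ := by
              rcases hi₀ with h | h
              · exact absurd hkk h
              · exact h
            rw [← hkk] at hb1 hb3
            refine piece_sep (hπ3 i₀) hRpos ha1 hb1 ?_
            rw [ha3, hb3]
            exact hcc
          · have htriangle := abs_dist_sub_le (x i₀) (y i₀) (x₀ i₀)
            rw [dist_comm (x i₀) (x₀ i₀), dist_comm (y i₀) (x₀ i₀)] at htriangle
            have habs1 : dist (x₀ i₀) (x i₀) - dist (x₀ i₀) (y i₀) ≤ dist (x i₀) (y i₀) :=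
              le_trans (le_abs_self _) htriangle
            have habs2 : dist (x₀ i₀) (y i₀) - dist (x₀ i₀) (x i₀) ≤ dist (x i₀) (y i₀) := by
              rw [abs_sub_comm] at htriangle
              exact le_trans (le_abs_self _) htriangle
            rcases lt_or_gt_of_ne hkk with h | h
            · have hcast : (k i₀ : ℝ) + 1 ≤ (k' i₀ : ℝ) := by exact_mod_cast h
              have hmul := mul_le_mul_of_nonneg_left hcast hLpos.le
              have hring : L * ((k i₀ : ℝ) + 1) = L * (k i₀ : ℝ) + L := by ring
              linarith
            · have hcast : (k' i₀ : ℝ) + 1 ≤ (k i₀ : ℝ) := by exact_mod_cast h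
              have hmul := mul_le_mul_of_nonneg_left hcast hLpos.le
              have hring : L * ((k' i₀ : ℝ) + 1) = L * (k' i₀ : ℝ) + L := by ring
              linarith
        have hle : dist (x i₀) (y i₀) ≤ ∑ i, dist (x i) (y i) :=
          Finset.single_le_sum (fun i _ => dist_nonneg) (Finset.mem_univ i₀)
        rw [hdistsum x y]
        linarith
  refine ⟨sInf_le ⟨n, rfl, hmain⟩, sInf_le ⟨n, rfl, ?_⟩⟩
  obtain ⟨C, hC, R₀, hR₀, hcov⟩ := hmain
  exact ⟨R₀, hR₀, fun R hR => ⟨C * R, mul_pos hC (lt_of_lt_of_le hR₀ hR), hcov R hR⟩⟩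
end
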